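/- arXiv:2007.13132 — 15 statements merged into one kernel-verified Lean document; each statement's English description precedes it below -/
import Mathlib

section
/- For any finite simple digraph D of order n, the Italian domination number of D satisfies γ_I(D) ≥ ⌈2n / (2 + Δ⁺(D))⌉, where Δ⁺(D) is the maximum out-degree of D. -/
/-- An Italian dominating function on a digraph given by adjacency relation `adj`:
`f : V → {0,1,2}` such that every vertex with value 0 has an in-neighbor with value 2
or two distinct in-neighbors with value 1. -/
def IsIDF {V : Type*} (adj : V → V → Prop) (f : V → ℕ) : Prop :=
  (∀ v, f v ≤ 2) ∧ ∀ v, f v = 0 →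
    (∃ w, adj w v ∧ f w = 2) ∨
    (∃ w₁ w₂, w₁ ≠ w₂ ∧ adj w₁ v ∧ adj w₂ v ∧ f w₁ = 1 ∧ f w₂ = 1)

/-- The Italian domination number: minimum weight of an Italian dominating function. -/
noncomputable def italianDomNum (V : Type*) [Fintype V] (adj : V → V → Prop) : ℕ :=
  sInf {w : ℕ | ∃ f : V → ℕ, IsIDF adj f ∧ ∑ v, f v = w}

/-- The directed cycle on `n` vertices: arc `i → i+1 (mod n)`. -/
def cycleAdj (n : ℕ) (i j : Fin n) : Prop := (j : ℕ) = ((i : ℕ) + 1) % n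

/-- Cartesian product of digraphs. -/
def cartAdj {α β : Type*} (A : α → α → Prop) (B : β → β → Prop) (x y : α × β) : Prop :=
  (x.1 = y.1 ∧ B x.2 y.2) ∨ (A x.1 y.1 ∧ x.2 = y.2)

/-- Strong product of digraphs. -/
def strongAdj {α β : Type*} (A : α → α → Prop) (B : β → β → Prop) (x y : α × β) : Prop :=
  (A x.1 y.1 ∧ B x.2 y.2) ∨ (x.1 = y.1 ∧ B x.2 y.2) ∨ (A x.1 y.1 ∧ x.2 = y.2)

/-- Maximum out-degree of a finite digraph. -/
noncomputable def maxOutDeg (V : Type*) [Fintype V] (adj : V → V → Prop) : ℕ :=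
  Finset.univ.sup fun v => Nat.card {w | adj v w}

/-- Maximum in-degree of a finite digraph. -/
noncomputable def maxInDeg (V : Type*) [Fintype V] (adj : V → V → Prop) : ℕ :=
  Finset.univ.sup fun v => Nat.card {w | adj w v}

theorem stmt0 {V : Type*} [Fintype V] (adj : V → V → Prop)
    (hsimple : ∀ v, ¬ adj v v) :
    italianDomNum V adj ≥
      (2 * Fintype.card V + maxOutDeg V adj + 1) / (2 + maxOutDeg V adj) := by
  classical
  set Δ := maxOutDeg V adj with hΔ
  have hne : {w : ℕ | ∃ f : V → ℕ, IsIDF adj f ∧ ∑ v, f v = w}.Nonempty :=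
    ⟨∑ _v : V, 2, fun _ => 2, ⟨fun _ => le_refl 2, fun v h => by simp at h⟩, rfl⟩
  obtain ⟨f, hf, hsum⟩ := Nat.sInf_mem hne
  rw [ge_iff_le, italianDomNum, ← hsum]
  clear hsum hne
  obtain ⟨hle, hcov⟩ := hf
  set w := ∑ v, f v with hw
  set V0 := Finset.univ.filter (fun v => f v = 0) with hV0
  -- every 0-vertex receives at least 2 from in-neighbors
  have hA : ∀ v ∈ V0, 2 ≤ ∑ u ∈ Finset.univ.filter (fun u => adj u v), f u := by
    intro v hv
    simp only [hV0, Finset.mem_filter] at hv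
    rcases hcov v hv.2 with ⟨u, hu, hu2⟩ | ⟨u₁, u₂, hne', h1, h2, hf1, hf2⟩
    · calc 2 = f u := hu2.symm
        _ ≤ _ := Finset.single_le_sum (fun _ _ => Nat.zero_le _) (by simp [hu])
    · have hsub : ({u₁, u₂} : Finset V) ⊆ Finset.univ.filter (fun u => adj u v) := by
        intro x hx
        simp only [Finset.mem_insert, Finset.mem_singleton] at hx
        rcases hx with rfl | rfl <;> simp [h1, h2]
      calc 2 = ∑ u ∈ ({u₁, u₂} : Finset V), f u := by
            rw [Finset.sum_pair hne', hf1, hf2]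
        _ ≤ _ := Finset.sum_le_sum_of_subset hsub
  -- out-degree bound
  have hdeg : ∀ u : V, (Finset.univ.filter (fun v => adj u v)).card ≤ Δ := by
    intro u
    have : Nat.card {v | adj u v} = (Finset.univ.filter (fun v => adj u v)).card := by
      rw [Nat.card_eq_fintype_card]
      simp [Fintype.card_subtype]
    rw [← this]
    exact Finset.le_sup (f := fun v => Nat.card {w | adj v w}) (Finset.mem_univ u)
  -- double counting
  have hswap : ∑ v ∈ V0, ∑ u ∈ Finset.univ.filter (fun u => adj u v), f u ≤ Δ * w := by
    calc ∑ v ∈ V0, ∑ u ∈ Finset.univ.filter (fun u => adj u v), f u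
        = ∑ v ∈ V0, ∑ u, if adj u v then f u else 0 := by
          refine Finset.sum_congr rfl fun v _ => ?_
          rw [Finset.sum_filter]
      _ = ∑ u, ∑ v ∈ V0, if adj u v then f u else 0 := Finset.sum_comm
      _ = ∑ u, (V0.filter (fun v => adj u v)).card * f u := by
          refine Finset.sum_congr rfl fun u _ => ?_
          rw [← Finset.sum_filter, Finset.sum_const, smul_eq_mul]
      _ ≤ ∑ u, Δ * f u := by
          refine Finset.sum_le_sum fun u _ => ?_
          refine Nat.mul_le_mul_right _ (le_trans (Finset.card_le_card ?_) (hdeg u))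
          intro x hx
          simp only [Finset.mem_filter] at hx ⊢
          exact ⟨Finset.mem_univ x, hx.2⟩
      _ = Δ * w := by rw [← Finset.mul_sum]
  have h2V0 : 2 * V0.card ≤ Δ * w := by
    calc 2 * V0.card = ∑ _v ∈ V0, 2 := by rw [Finset.sum_const, smul_eq_mul, mul_comm]
      _ ≤ ∑ v ∈ V0, ∑ u ∈ Finset.univ.filter (fun u => adj u v), f u :=
          Finset.sum_le_sum hA
      _ ≤ Δ * w := hswap
  -- n ≤ |V0| + w
  have hn : Fintype.card V ≤ V0.card + w := by
    have h1 : (Finset.univ.filter (fun v => ¬ f v = 0)).card ≤ w := by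
      calc (Finset.univ.filter (fun v => ¬ f v = 0)).card
          = ∑ _v ∈ Finset.univ.filter (fun v => ¬ f v = 0), 1 := by simp
        _ ≤ ∑ v ∈ Finset.univ.filter (fun v => ¬ f v = 0), f v :=
            Finset.sum_le_sum fun v hv =>
              Nat.one_le_iff_ne_zero.2 (Finset.mem_filter.1 hv).2
        _ ≤ w := Finset.sum_le_sum_of_subset (Finset.filter_subset _ _)
    have h2 := Finset.card_filter_add_card_filter_not
      (s := (Finset.univ : Finset V)) (p := fun v => f v = 0)
    rw [Finset.card_univ, ← hV0] at h2
    omega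
  have hkey : 2 * Fintype.card V ≤ (2 + Δ) * w := by
    have hr : (2 + Δ) * w = 2 * w + Δ * w := by ring
    omega
  have h2Δ : 0 < 2 + Δ := by omega
  rw [Nat.div_le_iff_le_mul_add_pred h2Δ]
  have hr : (2 + Δ) * w = 2 * w + Δ * w := by ring
  omega
end

section
/- For any finite simple digraph D of order n, γ_I(D) ≤ n, and moreover γ_I(D) = n if and only if both the maximum out-degree Δ⁺(D) and the maximum in-degree Δ⁻(D) are at most 1. -/
theorem stmt1 {V : Type*} [Fintype V] (adj : V → V → Prop)
    (hsimple : ∀ v, ¬ adj v v) :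
    italianDomNum V adj ≤ Fintype.card V ∧
    (italianDomNum V adj = Fintype.card V ↔
      maxOutDeg V adj ≤ 1 ∧ maxInDeg V adj ≤ 1) := by
  classical
  set S := {w : ℕ | ∃ f : V → ℕ, IsIDF adj f ∧ ∑ v, f v = w} with hS
  have hmem : Fintype.card V ∈ S := by
    refine ⟨fun _ => 1, ⟨fun v => by norm_num, fun v h => by simp at h⟩, ?_⟩
    simp
  have hidn : italianDomNum V adj = sInf S := rfl
  have hle : italianDomNum V adj ≤ Fintype.card V := Nat.sInf_le hmem
  -- Lemma A : big out-degree gives a small IDF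
  have hA : 2 ≤ maxOutDeg V adj → ∃ m ∈ S, m < Fintype.card V := by
    intro h
    rw [maxOutDeg, Finset.le_sup_iff (by norm_num : (0:ℕ) < 2)] at h
    obtain ⟨v, -, hv⟩ := h
    rw [Nat.card_coe_set_eq] at hv
    obtain ⟨a, b, ha, hb, hab⟩ :=
      (Set.one_lt_ncard_iff (s := {w | adj v w}) (Set.toFinite _)).mp (by omega)
    simp only [Set.mem_setOf_eq] at ha hb
    have hav : a ≠ v := fun h => hsimple v (h ▸ ha)
    have hbv : b ≠ v := fun h => hsimple v (h ▸ hb)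
    set f : V → ℕ := fun u => if u = v then 2 else if u = a ∨ u = b then 0 else 1 with hf
    refine ⟨∑ u, f u, ⟨f, ⟨?_, ?_⟩, rfl⟩, ?_⟩
    · intro u; simp only [hf]; split_ifs <;> omega
    · intro u hu
      simp only [hf] at hu
      split_ifs at hu with h1 h2
      · left
        rcases h2 with rfl | rfl
        · exact ⟨v, ha, by simp [hf]⟩
        · exact ⟨v, hb, by simp [hf]⟩
    · have hsub : ({v, a, b} : Finset V) ⊆ Finset.univ := Finset.subset_univ _
      have hcard3 : ({v, a, b} : Finset V).card = 3 := by
        rw [Finset.card_insert_of_notMem (by simp [Ne.symm hav, Ne.symm hbv]),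
          Finset.card_insert_of_notMem (by simp [hab])]
        simp
      have h3le : 3 ≤ Fintype.card V := by
        calc 3 = ({v, a, b} : Finset V).card := hcard3.symm
        _ ≤ _ := by simpa using Finset.card_le_card hsub
      have hsum1 : ∑ u ∈ ({v, a, b} : Finset V), f u = 2 := by
        rw [Finset.sum_insert (by simp [Ne.symm hav, Ne.symm hbv]),
          Finset.sum_insert (by simp [hab]), Finset.sum_singleton]
        simp [hf, hav, hbv]
      have hsum2 : ∑ u ∈ Finset.univ \ ({v, a, b} : Finset V), f u
          = Fintype.card V - 3 := by
        have hone : ∀ u ∈ Finset.univ \ ({v, a, b} : Finset V), f u = 1 := by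
          intro u hu
          simp only [Finset.mem_sdiff, Finset.mem_insert, Finset.mem_singleton] at hu
          push_neg at hu
          simp [hf, hu.2.1, hu.2.2.1, hu.2.2.2]
        rw [Finset.sum_congr rfl hone, Finset.sum_const, smul_eq_mul, mul_one,
          Finset.card_sdiff_of_subset hsub, Finset.card_univ, hcard3]
      have := Finset.sum_sdiff hsub (f := f)
      omega
  -- Lemma B : big in-degree gives a small IDF
  have hB : 2 ≤ maxInDeg V adj → ∃ m ∈ S, m < Fintype.card V := by
    intro h
    rw [maxInDeg, Finset.le_sup_iff (by norm_num : (0:ℕ) < 2)] at h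
    obtain ⟨v, -, hv⟩ := h
    rw [Nat.card_coe_set_eq] at hv
    obtain ⟨a, b, ha, hb, hab⟩ :=
      (Set.one_lt_ncard_iff (s := {w | adj w v}) (Set.toFinite _)).mp (by omega)
    simp only [Set.mem_setOf_eq] at ha hb
    have hav : a ≠ v := fun h => hsimple v (h ▸ ha)
    have hbv : b ≠ v := fun h => hsimple v (h ▸ hb)
    set f : V → ℕ := fun u => if u = v then 0 else 1 with hf
    refine ⟨∑ u, f u, ⟨f, ⟨?_, ?_⟩, rfl⟩, ?_⟩
    · intro u; simp only [hf]; split_ifs <;> omega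
    · intro u hu
      simp only [hf] at hu
      split_ifs at hu with h1
      subst h1
      exact Or.inr ⟨a, b, hab, ha, hb, by simp [hf, hav], by simp [hf, hbv]⟩
    · have h1le : 1 ≤ Fintype.card V := Fintype.card_pos_iff.mpr ⟨v⟩
      have := Finset.sum_erase_add Finset.univ f (Finset.mem_univ v)
      have hsum2 : ∑ u ∈ Finset.univ.erase v, f u = Fintype.card V - 1 := by
        have hone : ∀ u ∈ Finset.univ.erase v, f u = 1 := by
          intro u hu
          simp only [Finset.mem_erase] at hu
          simp [hf, hu.1]
        rw [Finset.sum_congr rfl hone, Finset.sum_const, smul_eq_mul, mul_one,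
          Finset.card_erase_of_mem (Finset.mem_univ v), Finset.card_univ]
      have hfv : f v = 0 := by simp [hf]
      omega
  -- Lemma C : small degrees force weight ≥ n
  have hC : maxOutDeg V adj ≤ 1 → maxInDeg V adj ≤ 1 →
      ∀ m ∈ S, Fintype.card V ≤ m := by
    rintro hout hin m ⟨f, ⟨hf2, hf0⟩, rfl⟩
    set Z := Finset.univ.filter (fun v => f v = 0) with hZ
    set T := Finset.univ.filter (fun v => f v = 2) with hT
    have hg : ∀ v ∈ Z, ∃ w, adj w v ∧ f w = 2 := by
      intro v hv
      rcases hf0 v (by simpa [hZ] using hv) with h | ⟨w₁, w₂, hne, h1, h2, -, -⟩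
      · exact h
      · exfalso
        have h2le : 2 ≤ Nat.card {w | adj w v} := by
          rw [Nat.card_coe_set_eq]
          have : 1 < ({w | adj w v} : Set V).ncard :=
            (Set.one_lt_ncard_iff (Set.toFinite _)).mpr ⟨w₁, w₂, h1, h2, hne⟩
          omega
        have := Finset.le_sup (f := fun v => Nat.card {w | adj w v}) (Finset.mem_univ v)
        have : Nat.card {w | adj w v} ≤ maxInDeg V adj := this
        omega
    choose g hg1 hg2 using hg
    have hZT : Z.card ≤ T.card := by
      apply Finset.card_le_card_of_injOn (fun v => if h : v ∈ Z then g v h else v)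
      · intro v hv
        simp only [hT, Finset.mem_coe, Finset.mem_filter, Finset.mem_univ, true_and, dif_pos (Finset.mem_coe.mp hv)]
        exact hg2 v hv
      · intro v hv v' hv' hgg
        rw [Finset.mem_coe] at hv hv'
        simp only [dif_pos hv, dif_pos hv'] at hgg
        by_contra hne
        have h2le : 2 ≤ Nat.card {w | adj (g v hv) w} := by
          rw [Nat.card_coe_set_eq]
          have : 1 < ({w | adj (g v hv) w} : Set V).ncard := by
            refine (Set.one_lt_ncard_iff (Set.toFinite _)).mpr ⟨v, v', hg1 v hv, ?_, hne⟩
            rw [Set.mem_setOf_eq, hgg]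
            exact hg1 v' hv'
          omega
        have := Finset.le_sup (f := fun v => Nat.card {w | adj v w})
          (Finset.mem_univ (g v hv))
        have : Nat.card {w | adj (g v hv) w} ≤ maxOutDeg V adj := this
        omega
    have hsum : ∑ v, f v = (Finset.univ.filter (fun v => ¬ f v = 0)).card + T.card := by
      rw [hT, Finset.card_filter, Finset.card_filter, ← Finset.sum_add_distrib]
      apply Finset.sum_congr rfl
      intro v _
      have := hf2 v
      split_ifs <;> omega
    have hcard : Z.card + (Finset.univ.filter (fun v => ¬ f v = 0)).card = Fintype.card V := by
      rw [hZ]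
      simpa using Finset.card_filter_add_card_filter_not
        (s := Finset.univ) (p := fun v => f v = 0)
    omega
  refine ⟨hle, ⟨?_, ?_⟩⟩
  · intro heq
    constructor
    · by_contra h
      obtain ⟨m, hm, hlt⟩ := hA (by omega)
      have := Nat.sInf_le hm
      omega
    · by_contra h
      obtain ⟨m, hm, hlt⟩ := hB (by omega)
      have := Nat.sInf_le hm
      omega
  · rintro ⟨h1, h2⟩
    exact le_antisymm hle (le_csInf ⟨_, hmem⟩ (hC h1 h2))
end

section
/- If D is a directed cycle of order n (vertices 1,…,n with arcs i → i+1 taken modulo n), then γ_I(D) = n. -/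
lemma cycleAdj_iff (n : ℕ) [NeZero n] (hn : 2 ≤ n) (w v : Fin n) :
    cycleAdj n w v ↔ w = v - 1 := by
  have h1 : (1 : Fin n).val = 1 := by
    rw [Fin.val_one']; exact Nat.mod_eq_of_lt hn
  have key : ∀ x : Fin n, ((x + 1 : Fin n) : ℕ) = ((x : ℕ) + 1) % n := by
    intro x; rw [Fin.add_def, h1]
  constructor
  · intro h
    have hv : v = w + 1 := Fin.ext (by rw [key]; exact h)
    rw [hv]; exact (add_sub_cancel_right w 1).symm
  · intro h
    subst h
    show (v : ℕ) = _
    rw [← key]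
    congr 1
    exact (sub_add_cancel v 1).symm

theorem stmt2 (n : ℕ) (hn : 2 ≤ n) :
    italianDomNum (Fin n) (cycleAdj n) = n := by
  haveI : NeZero n := ⟨by omega⟩
  have hmem : (n : ℕ) ∈ {w : ℕ | ∃ f : Fin n → ℕ, IsIDF (cycleAdj n) f ∧ ∑ v, f v = w} := by
    refine ⟨fun _ => 1, ⟨fun v => by norm_num, fun v h => by simp at h⟩, by simp⟩
  apply le_antisymm
  · exact Nat.sInf_le hmem
  · apply le_csInf ⟨n, hmem⟩
    rintro w ⟨f, ⟨hb, hdom⟩, rfl⟩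
    set Z := Finset.univ.filter (fun v => f v = 0) with hZ
    set T := Finset.univ.filter (fun v => f v = 2) with hT
    have hZT : Z.card ≤ T.card := by
      apply Finset.card_le_card_of_injOn (fun v => v - 1)
      · intro v hv
        simp only [hZ, Finset.mem_coe, Finset.mem_filter, Finset.mem_univ, true_and] at hv
        simp only [hT, Finset.mem_coe, Finset.mem_filter, Finset.mem_univ, true_and]
        rcases hdom v hv with ⟨u, hu, hu2⟩ | ⟨w₁, w₂, hne, h1, h2, _, _⟩
        · rwa [(cycleAdj_iff n hn u v).mp hu] at hu2
        · exact absurd (((cycleAdj_iff n hn w₁ v).mp h1).trans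
            ((cycleAdj_iff n hn w₂ v).mp h2).symm) hne
      · intro a _ b _ h
        have := congrArg (· + 1) h
        simpa using this
    have key : ∀ v : Fin n, 1 + (if f v = 2 then 1 else 0) ≤
        f v + (if f v = 0 then 1 else 0) := by
      intro v; split_ifs <;> omega
    have hsum := Finset.sum_le_sum (fun v (_ : v ∈ Finset.univ) => key v)
    rw [Finset.sum_add_distrib, Finset.sum_add_distrib, Finset.sum_const,
      Finset.card_univ, Fintype.card_fin, ← Finset.card_filter, ← Finset.card_filter]
      at hsum
    simp only [smul_eq_mul, mul_one, ← hZ, ← hT] at hsum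
    omega
end

section
/- If m = 2r and n = 2s for positive integers r, s, then the Italian domination number of the cartesian product of directed cycles satisfies γ_I(C_m □ C_n) = mn/2. -/
section Aux

lemma aux_mod2_of_le {m k : ℕ} (hm : m % 2 = 0) (hk : k ≤ m) : k % m % 2 = k % 2 := by
  rcases eq_or_lt_of_le hk with h | h
  · subst h; simp [Nat.mod_self]; omega
  · rw [Nat.mod_eq_of_lt h]

lemma aux_val_add_one {m : ℕ} [NeZero m] (hm2 : 2 ≤ m) (x : Fin m) :
    ((x + 1 : Fin m) : ℕ) = ((x : ℕ) + 1) % m := by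
  have h1 : ((1 : Fin m) : ℕ) = 1 := by rw [Fin.val_one']; exact Nat.mod_eq_of_lt hm2
  rw [Fin.val_add, h1]

lemma aux_parity {m : ℕ} [NeZero m] (hm2 : 2 ≤ m) (hm : m % 2 = 0) (x : Fin m) :
    ((x + 1 : Fin m) : ℕ) % 2 = ((x : ℕ) + 1) % 2 := by
  rw [aux_val_add_one hm2 x]
  exact aux_mod2_of_le hm (by have := x.isLt; omega)

lemma aux_cyc_iff {n : ℕ} [NeZero n] (hn2 : 2 ≤ n) (w v : Fin n) :
    cycleAdj n w v ↔ w + 1 = v := by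
  have h1 : ((w + 1 : Fin n) : ℕ) = ((w : ℕ) + 1) % n := aux_val_add_one hn2 w
  unfold cycleAdj
  constructor
  · intro h; exact Fin.ext (by rw [h1]; exact h.symm)
  · intro h; rw [← h, h1]

end Aux

theorem stmt4 (r s m n : ℕ) (hr : 1 ≤ r) (hs : 1 ≤ s) (hm : m = 2 * r) (hn : n = 2 * s) :
    italianDomNum (Fin m × Fin n) (cartAdj (cycleAdj m) (cycleAdj n)) = m * n / 2 := by
  have hm2 : 2 ≤ m := by omega
  have hn2 : 2 ≤ n := by omega
  have hme : m % 2 = 0 := by omega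
  have hne : n % 2 = 0 := by omega
  haveI : NeZero m := ⟨by omega⟩
  haveI : NeZero n := ⟨by omega⟩
  set adj := cartAdj (cycleAdj m) (cycleAdj n) with hadjdef
  -- characterization of in-neighbors
  have hadj : ∀ w v : Fin m × Fin n,
      adj w v ↔ (w = (v.1, v.2 - 1) ∨ w = (v.1 - 1, v.2)) := by
    intro w v
    rw [hadjdef]
    unfold cartAdj
    rw [aux_cyc_iff hn2, aux_cyc_iff hm2]
    constructor
    · rintro (⟨h1, h2⟩ | ⟨h1, h2⟩)
      · left; exact Prod.ext h1 (by rw [← h2]; abel)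
      · right; exact Prod.ext (by rw [← h1]; abel) h2
    · rintro (rfl | rfl)
      · left; exact ⟨rfl, sub_add_cancel _ _⟩
      · right; exact ⟨sub_add_cancel _ _, rfl⟩
  -- the checkerboard function
  set f0 : Fin m × Fin n → ℕ :=
    fun v => if ((v.1 : ℕ) + (v.2 : ℕ)) % 2 = 0 then 1 else 0 with hf0def
  have hone : ((1 : Fin m) : ℕ) = 1 := by rw [Fin.val_one']; exact Nat.mod_eq_of_lt hm2
  have hidf : IsIDF adj f0 := by
    constructor
    · intro v; simp only [hf0def]; split <;> omega
    · intro v hv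
      have hv' : ((v.1 : ℕ) + (v.2 : ℕ)) % 2 = 1 := by
        simp only [hf0def] at hv
        split at hv
        · exact absurd hv one_ne_zero
        · omega
      right
      refine ⟨(v.1 - 1, v.2), (v.1, v.2 - 1), ?_, ?_, ?_, ?_, ?_⟩
      · intro h
        have h1 : v.1 - 1 = v.1 := congrArg Prod.fst h
        rw [sub_eq_self] at h1
        have := congrArg Fin.val h1
        rw [hone, Fin.val_zero] at this
        omega
      · rw [hadj]; right; rfl
      · rw [hadj]; left; rfl
      · -- f0 (v.1 - 1, v.2) = 1
        have hp : (((v.1 - 1) + 1 : Fin m) : ℕ) % 2 = (((v.1 - 1 : Fin m) : ℕ) + 1) % 2 :=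
          aux_parity hm2 hme _
        have he : (v.1 - 1) + 1 = v.1 := by abel
        rw [he] at hp
        simp only [hf0def]
        have : (((v.1 - 1 : Fin m) : ℕ) + (v.2 : ℕ)) % 2 = 0 := by omega
        simp [this]
      · -- f0 (v.1, v.2 - 1) = 1
        have hp : (((v.2 - 1) + 1 : Fin n) : ℕ) % 2 = (((v.2 - 1 : Fin n) : ℕ) + 1) % 2 :=
          aux_parity hn2 hne _
        have he : (v.2 - 1) + 1 = v.2 := by abel
        rw [he] at hp
        simp only [hf0def]
        have : ((v.1 : ℕ) + ((v.2 - 1 : Fin n) : ℕ)) % 2 = 0 := by omega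
        simp [this]
  -- weight of f0 is m*n/2
  have hpair : ∀ v : Fin m × Fin n, f0 v + f0 (v.1, v.2 + 1) = 1 := by
    intro v
    have hp := aux_parity hn2 hne v.2
    simp only [hf0def]
    split <;> split <;> omega
  have hshift : ∑ v : Fin m × Fin n, f0 (v.1, v.2 + 1) = ∑ v, f0 v :=
    Fintype.sum_equiv (Equiv.prodCongr (Equiv.refl (Fin m)) (Equiv.addRight (1 : Fin n)))
      (fun v => f0 (v.1, v.2 + 1)) f0 (fun v => rfl)
  have h2w : 2 * ∑ v, f0 v = m * n := by
    calc 2 * ∑ v, f0 v = ∑ v, f0 v + ∑ v : Fin m × Fin n, f0 (v.1, v.2 + 1) := by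
          rw [hshift]; ring
    _ = ∑ v : Fin m × Fin n, (f0 v + f0 (v.1, v.2 + 1)) := (Finset.sum_add_distrib).symm
    _ = ∑ _v : Fin m × Fin n, 1 := Finset.sum_congr rfl fun v _ => hpair v
    _ = m * n := by simp [Finset.card_univ]
  have hw : ∑ v, f0 v = m * n / 2 := by omega
  -- lower bound
  have lower : ∀ f : Fin m × Fin n → ℕ, IsIDF adj f → m * n / 2 ≤ ∑ v, f v := by
    rintro f ⟨hf2, hf0⟩
    have hpt : ∀ v : Fin m × Fin n,
        2 ≤ 2 * f v + (f (v.1, v.2 - 1) + f (v.1 - 1, v.2)) := by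
      intro v
      rcases Nat.eq_zero_or_pos (f v) with h0 | h1
      · rcases hf0 v h0 with ⟨w, haw, hw2⟩ | ⟨w1, w2, hne12, h1a, h2a, hw11, hw21⟩
        · rw [hadj] at haw
          rcases haw with rfl | rfl <;> omega
        · rw [hadj] at h1a h2a
          rcases h1a with rfl | rfl <;> rcases h2a with rfl | rfl
          · exact absurd rfl hne12
          · omega
          · omega
          · exact absurd rfl hne12
      · omega
    have hs1 : ∑ v : Fin m × Fin n, f (v.1, v.2 - 1) = ∑ v, f v :=
      Fintype.sum_equiv (Equiv.prodCongr (Equiv.refl (Fin m)) (Equiv.subRight (1 : Fin n)))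
        (fun v => f (v.1, v.2 - 1)) f (fun v => rfl)
    have hs2 : ∑ v : Fin m × Fin n, f (v.1 - 1, v.2) = ∑ v, f v :=
      Fintype.sum_equiv (Equiv.prodCongr (Equiv.subRight (1 : Fin m)) (Equiv.refl (Fin n)))
        (fun v => f (v.1 - 1, v.2)) f (fun v => rfl)
    have htot : 2 * (m * n) ≤ 4 * ∑ v, f v := by
      calc 2 * (m * n) = ∑ _v : Fin m × Fin n, 2 := by simp [Finset.card_univ]; ring
      _ ≤ ∑ v : Fin m × Fin n, (2 * f v + (f (v.1, v.2 - 1) + f (v.1 - 1, v.2))) :=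
          Finset.sum_le_sum fun v _ => hpt v
      _ = 4 * ∑ v, f v := by
          rw [Finset.sum_add_distrib, Finset.sum_add_distrib, hs1, hs2, ← Finset.mul_sum]
          ring
    omega
  unfold italianDomNum
  apply le_antisymm
  · exact Nat.sInf_le ⟨f0, hidf, hw⟩
  · refine le_csInf ⟨m * n / 2, f0, hidf, hw⟩ ?_
    rintro b ⟨f, hf, rfl⟩
    exact lower f hf
end

section
/- For m = 2r and n = 2s with r, s positive integers, the function f on V(C_m □ C_n) defined by f((2i−1, 2j−1)) = f((2i, 2j)) = 1 for 1 ≤ i ≤ r, 1 ≤ j ≤ s, and f = 0 otherwise, is an Italian dominating function of C_m □ C_n of weight mn/2. -/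
/-- Parity of the predecessor on an even cycle flips. -/
lemma key_mod (k t : ℕ) (hk : k < 2 * t) (ht : 1 ≤ t) :
    (k + 2 * t - 1) % (2 * t) % 2 = (k + 1) % 2 := by
  rcases Nat.eq_zero_or_pos k with h0 | h0
  · subst h0
    rw [show (0 : ℕ) + 2 * t - 1 = 2 * t - 1 from by omega,
        Nat.mod_eq_of_lt (show 2 * t - 1 < 2 * t by omega)]
    omega
  · have h1 : k + 2 * t - 1 = (k - 1) + 2 * t := by omega
    have hlt : k - 1 < 2 * t := by omega
    rw [h1, Nat.add_mod_right, Nat.mod_eq_of_lt hlt]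
    omega

lemma pred_adj (t : ℕ) (ht : 1 ≤ t) (a : Fin (2 * t)) :
    cycleAdj (2 * t) ⟨((a : ℕ) + 2 * t - 1) % (2 * t), Nat.mod_lt _ (by omega)⟩ a := by
  show (a : ℕ) = (((a : ℕ) + 2 * t - 1) % (2 * t) + 1) % (2 * t)
  rw [Nat.mod_add_mod]
  have h1 : (a : ℕ) + 2 * t - 1 + 1 = (a : ℕ) + 2 * t := by omega
  rw [h1, Nat.add_mod_right, Nat.mod_eq_of_lt a.isLt]

lemma sum_range_parity (s c : ℕ) (hc : c < 2) :
    (∑ b ∈ Finset.range (2 * s), if c = b % 2 then 1 else 0) = s := by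
  induction s with
  | zero => simp
  | succ k ih =>
    have h2 : 2 * (k + 1) = (2 * k + 1) + 1 := by omega
    rw [h2, Finset.sum_range_succ, Finset.sum_range_succ, ih]
    have ha : (2 * k) % 2 = 0 := by omega
    have hb : (2 * k + 1) % 2 = 1 := by omega
    rw [ha, hb]
    interval_cases c <;> simp

theorem stmt5 (r s m n : ℕ) (hr : 1 ≤ r) (hs : 1 ≤ s) (hm : m = 2 * r) (hn : n = 2 * s) :
    IsIDF (cartAdj (cycleAdj m) (cycleAdj n))
      (fun p : Fin m × Fin n => if (p.1 : ℕ) % 2 = (p.2 : ℕ) % 2 then 1 else 0) ∧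
    (∑ p : Fin m × Fin n, if (p.1 : ℕ) % 2 = (p.2 : ℕ) % 2 then 1 else 0) = m * n / 2 := by
  subst hm hn
  constructor
  · constructor
    · intro v; dsimp only; split <;> omega
    · intro v hv
      obtain ⟨a, b⟩ := v
      have hne : ¬ ((a : ℕ) % 2 = (b : ℕ) % 2) := by
        intro h; simp only [h, if_pos rfl] at hv; exact one_ne_zero hv
      right
      refine ⟨(⟨((a : ℕ) + 2 * r - 1) % (2 * r), Nat.mod_lt _ (by omega)⟩, b),
              (a, ⟨((b : ℕ) + 2 * s - 1) % (2 * s), Nat.mod_lt _ (by omega)⟩), ?_, ?_, ?_, ?_, ?_⟩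
      · intro h
        have h1 : ((a : ℕ) + 2 * r - 1) % (2 * r) = (a : ℕ) := congrArg (fun p => (p.1 : ℕ)) h
        have h2 := key_mod (a : ℕ) r a.isLt hr
        omega
      · exact Or.inr ⟨pred_adj r hr a, rfl⟩
      · exact Or.inl ⟨rfl, pred_adj s hs b⟩
      · have h2 := key_mod (a : ℕ) r a.isLt hr
        have hb2 : (b : ℕ) % 2 < 2 := Nat.mod_lt _ (by omega)
        have ha2 : (a : ℕ) % 2 < 2 := Nat.mod_lt _ (by omega)
        simp only [if_pos (show (((a : ℕ) + 2 * r - 1) % (2 * r)) % 2 = (b : ℕ) % 2 by omega)]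
      · have h2 := key_mod (b : ℕ) s b.isLt hs
        have hb2 : (b : ℕ) % 2 < 2 := Nat.mod_lt _ (by omega)
        have ha2 : (a : ℕ) % 2 < 2 := Nat.mod_lt _ (by omega)
        simp only [if_pos (show (a : ℕ) % 2 = (((b : ℕ) + 2 * s - 1) % (2 * s)) % 2 by omega)]
  · rw [Fintype.sum_prod_type]
    have hcol : ∀ a : Fin (2 * r),
        (∑ b : Fin (2 * s), if (a : ℕ) % 2 = (b : ℕ) % 2 then 1 else 0) = s := by
      intro a
      rw [Fin.sum_univ_eq_sum_range (fun k => if (a : ℕ) % 2 = k % 2 then 1 else 0)]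
      exact sum_range_parity s ((a : ℕ) % 2) (Nat.mod_lt _ (by omega))
    simp only [hcol, Finset.sum_const, Finset.card_univ, Fintype.card_fin, smul_eq_mul]
    rw [show 2 * r * (2 * s) = (2 * r * s) * 2 by ring, Nat.mul_div_cancel _ (by norm_num)]
end

section
/- For every odd integer n ≥ 3, the Italian domination number of the cartesian product C₂ □ C_n of directed cycles equals n + 1. -/
section AuxIDF

private lemma fin2_cases (x : Fin 2) : x = 0 ∨ x = 1 := by revert x; decide

private lemma fin2_add11 (x : Fin 2) : x + 1 + 1 = x := by revert x; decide

private lemma fin2_ne {a x : Fin 2} (h : a ≠ x) : x = a + 1 := by revert h; revert a x; decide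

private lemma fin2_flip {a b : Fin 2} (h : a = b + 1) : b = a + 1 := by revert h; revert a b; decide

private lemma adj2_iff (b a : Fin 2) : cycleAdj 2 b a ↔ b = a + 1 := by
  revert b a; unfold cycleAdj; decide

private lemma adjn_iff {n : ℕ} [NeZero n] (hn : 1 < n) (j i : Fin n) :
    cycleAdj n j i ↔ j = i - 1 := by
  have h1 : cycleAdj n j i ↔ i = j + 1 := by
    unfold cycleAdj
    rw [Fin.ext_iff, Fin.add_def, Fin.val_one', Nat.mod_eq_of_lt hn]
  rw [h1, eq_comm]
  exact eq_sub_iff_add_eq.symm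

private lemma inNbr {n : ℕ} [NeZero n] (hn : 1 < n) (w : Fin 2 × Fin n) (a : Fin 2) (i : Fin n) :
    cartAdj (cycleAdj 2) (cycleAdj n) w (a, i) ↔ w = (a, i - 1) ∨ w = (a + 1, i) := by
  obtain ⟨b, j⟩ := w
  simp only [cartAdj, adj2_iff, adjn_iff hn, Prod.mk.injEq]
  try tauto

private lemma cover {n : ℕ} [NeZero n] (hn : 1 < n) {f : Fin 2 × Fin n → ℕ}
    (hf : IsIDF (cartAdj (cycleAdj 2) (cycleAdj n)) f) {a : Fin 2} {i : Fin n}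
    (h0 : f (a, i) = 0) :
    f (a, i - 1) = 2 ∨ f (a + 1, i) = 2 ∨ (f (a, i - 1) = 1 ∧ f (a + 1, i) = 1) := by
  rcases hf.2 (a, i) h0 with ⟨w, hw, hw2⟩ | ⟨w₁, w₂, hne, h1, h2, v1, v2⟩
  · rcases (inNbr hn w a i).1 hw with rfl | rfl
    · exact Or.inl hw2
    · exact Or.inr (Or.inl hw2)
  · rcases (inNbr hn w₁ a i).1 h1 with rfl | rfl <;>
      rcases (inNbr hn w₂ a i).1 h2 with rfl | rfl
    · exact absurd rfl hne
    · exact Or.inr (Or.inr ⟨v1, v2⟩)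
    · exact Or.inr (Or.inr ⟨v2, v1⟩)
    · exact absurd rfl hne

open Fin.NatCast in
private lemma lowerBdd {n : ℕ} [NeZero n] (hn : 3 ≤ n) (hodd : Odd n)
    {f : Fin 2 × Fin n → ℕ}
    (hf : IsIDF (cartAdj (cycleAdj 2) (cycleAdj n)) f) : n + 1 ≤ ∑ v, f v := by
  have hn1 : 1 < n := by omega
  set c : Fin n → ℕ := fun i => f (0, i) + f (1, i) with hc
  have e01 : (0 : Fin 2) + 1 = 1 := by decide
  have e11 : (1 : Fin 2) + 1 = 0 := by decide
  have hsum : ∑ v, f v = ∑ i, c i := by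
    rw [Fintype.sum_prod_type, Fin.sum_univ_two, ← Finset.sum_add_distrib]
  have hsplit : ∀ (b : Fin 2) (j : Fin n), f (b, j) + f (b + 1, j) = c j := by
    intro b j
    rcases fin2_cases b with rfl | rfl
    · rw [e01]
    · rw [e11, Nat.add_comm]
  have K0 : ∀ j, c j = 0 → c (j - 1) = 4 := by
    intro j hj
    have h0 : f (0, j) = 0 := by have := hsplit 0 j; rw [e01] at this; omega
    have h1 : f (1, j) = 0 := by have := hsplit 0 j; rw [e01] at this; omega
    have c0 := cover hn1 hf h0
    have c1 := cover hn1 hf h1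
    rw [e01] at c0
    rw [e11] at c1
    have g0 : f (0, j - 1) = 2 := by omega
    have g1 : f (1, j - 1) = 2 := by omega
    have := hsplit 0 (j - 1); rw [e01] at this; omega
  -- discharging inequality
  have key : ∀ i ∈ Finset.univ, (1 + if c (i + 1) = 0 then (2:ℕ) else 0)
      ≤ c i + if c i = 0 then (2:ℕ) else 0 := by
    intro i _
    by_cases h1 : c (i + 1) = 0
    · have h4 : c i = 4 := by
        have := K0 (i + 1) h1
        rwa [add_sub_cancel_right] at this
      simp [h1, h4]
    · by_cases h2 : c i = 0 <;> simp [h1, h2] <;> omega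
  have reidx : ∑ i : Fin n, (if c (i + 1) = 0 then (2:ℕ) else 0)
      = ∑ i : Fin n, (if c i = 0 then (2:ℕ) else 0) :=
    Fintype.sum_equiv (Equiv.addRight 1) _ _ (fun x => by rw [Equiv.coe_addRight])
  have sumL : ∑ i : Fin n, (1 + if c (i + 1) = 0 then (2:ℕ) else 0)
      = n + ∑ i : Fin n, (if c i = 0 then (2:ℕ) else 0) := by
    rw [Finset.sum_add_distrib, Finset.sum_const, Finset.card_univ, Fintype.card_fin,
      smul_eq_mul, mul_one, reidx]
  have sumR : ∑ i : Fin n, (c i + if c i = 0 then (2:ℕ) else 0)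
      = (∑ i, c i) + ∑ i : Fin n, (if c i = 0 then (2:ℕ) else 0) :=
    Finset.sum_add_distrib
  have hge : n ≤ ∑ i, c i := by
    have := Finset.sum_le_sum key
    rw [sumL, sumR] at this
    omega
  by_contra hcon
  push_neg at hcon
  rw [hsum] at hcon
  have heq : ∑ i, c i = n := by omega
  -- equality in every term
  have alleq : ∀ i, (1 + if c (i + 1) = 0 then (2:ℕ) else 0)
      = c i + if c i = 0 then (2:ℕ) else 0 := by
    by_contra hx
    push_neg at hx
    obtain ⟨i, hi⟩ := hx
    have hlt := Finset.sum_lt_sum key ⟨i, Finset.mem_univ i,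
      lt_of_le_of_ne (key i (Finset.mem_univ i)) hi⟩
    rw [sumL, sumR, heq] at hlt
    omega
  have hone : ∀ i, c i = 1 := by
    intro i
    have h := alleq i
    by_cases h1 : c (i + 1) = 0
    · have h4 : c i = 4 := by
        have := K0 (i + 1) h1
        rwa [add_sub_cancel_right] at this
      simp [h1, h4] at h
    · by_cases h2 : c i = 0 <;> simp [h1, h2] at h <;> omega
  -- propagation
  have fle : ∀ (b : Fin 2) (j : Fin n), f (b, j) ≤ 1 := by
    intro b j
    have := hsplit b j
    rw [hone j] at this
    omega
  have onekey : ∀ (a : Fin 2) (i : Fin n), f (a, i) = 1 → f (a + 1, i + 1) = 1 := by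
    intro a i ha
    obtain ⟨b, hb1, hb0⟩ : ∃ b : Fin 2, f (b, i + 1) = 1 ∧ f (b + 1, i + 1) = 0 := by
      have h := hsplit 0 (i + 1)
      rw [e01, hone (i + 1)] at h
      rcases (by omega : f (0, i + 1) = 1 ∧ f (1, i + 1) = 0 ∨
          f (0, i + 1) = 0 ∧ f (1, i + 1) = 1) with ⟨u, v⟩ | ⟨u, v⟩
      · exact ⟨0, u, by rw [e01]; exact v⟩
      · exact ⟨1, v, by rw [e11]; exact u⟩
    have hcov := cover hn1 hf hb0
    rw [add_sub_cancel_right] at hcov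
    rw [fin2_add11 b] at hcov
    have h2i : f (b + 1, i) = 1 := by
      have t1 := fle (b + 1) i
      have t2 := fle b (i + 1)
      omega
    have hab : a = b + 1 := by
      by_contra hne
      rw [fin2_ne hne] at h2i
      have := hsplit a i
      rw [hone i] at this
      omega
    have hb : b = a + 1 := fin2_flip hab
    rw [← hb]
    exact hb1
  -- find a 1 in column 0 and iterate around the odd cycle
  obtain ⟨a₀, ha₀⟩ : ∃ a : Fin 2, f (a, (0 : Fin n)) = 1 := by
    have h := hsplit 0 0
    rw [e01, hone 0] at h
    rcases (by omega : f (0, (0:Fin n)) = 1 ∨ f (1, (0:Fin n)) = 1) with u | u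
    · exact ⟨0, u⟩
    · exact ⟨1, u⟩
  have iter : ∀ k : ℕ, f (a₀ + (k : Fin 2), (k : Fin n)) = 1 := by
    intro k
    induction k with
    | zero => simpa using ha₀
    | succ m ih =>
      have := onekey _ _ ih
      rw [add_assoc] at this
      push_cast
      exact this
  have hfin := iter n
  have hn2 : ((n : ℕ) : Fin 2) = 1 := by
    rw [Fin.ext_iff, Fin.val_natCast, Fin.val_one]
    exact Nat.odd_iff.mp hodd
  rw [hn2, Fin.natCast_self] at hfin
  have := hsplit a₀ 0
  rw [hone 0] at this
  omega

end AuxIDF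

section AuxUp

private def upF (n : ℕ) : Fin 2 × Fin n → ℕ := fun p =>
  (if (p.1 : ℕ) = (p.2 : ℕ) % 2 then 1 else 0) +
    (if (p.1 : ℕ) = 1 ∧ (p.2 : ℕ) = n - 1 then 1 else 0)

private lemma fin2_succ_ne (a : Fin 2) : a + 1 ≠ a := by revert a; decide

private lemma fin2_val_add_one (a : Fin 2) : ((a + 1 : Fin 2) : ℕ) = 1 - (a : ℕ) := by
  revert a; decide

private lemma sub_one_val {n : ℕ} [NeZero n] (hn : 1 < n) (i : Fin n) :
    ((i - 1 : Fin n) : ℕ) = if (i : ℕ) = 0 then n - 1 else (i : ℕ) - 1 := by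
  rw [Fin.sub_def]
  simp only [Fin.val_one', Nat.mod_eq_of_lt hn]
  by_cases h : (i : ℕ) = 0
  · simp [h, Nat.mod_eq_of_lt (by omega : n - 1 < n)]
  · have hi : (i : ℕ) < n := i.isLt
    have : n - 1 + (i : ℕ) = n + ((i : ℕ) - 1) := by omega
    rw [if_neg h, this, Nat.add_mod_left, Nat.mod_eq_of_lt (by omega)]

private lemma upF_isIDF {n : ℕ} [NeZero n] (hn : 3 ≤ n) (hodd : Odd n) :
    IsIDF (cartAdj (cycleAdj 2) (cycleAdj n)) (upF n) := by
  have hn1 : 1 < n := by omega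
  have hmod : n % 2 = 1 := Nat.odd_iff.mp hodd
  constructor
  · rintro ⟨a, i⟩
    unfold upF
    dsimp only
    split_ifs <;> omega
  · rintro ⟨a, i⟩ h0
    unfold upF at h0
    dsimp only at h0
    have ha2 : (a : ℕ) < 2 := a.isLt
    have hin : (i : ℕ) < n := i.isLt
    have hA : (a : ℕ) ≠ (i : ℕ) % 2 := by
      intro h; rw [if_pos h] at h0; omega
    have hB : ¬((a : ℕ) = 1 ∧ (i : ℕ) = n - 1) := by
      intro h
      rw [if_pos h] at h0; omega
    right
    refine ⟨(a + 1, i), (a, i - 1), ?_, ?_, ?_, ?_, ?_⟩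
    · intro h
      have := congrArg Prod.fst h
      simp only at this
      exact fin2_succ_ne a this
    · exact Or.inr ⟨(adj2_iff (a + 1) a).2 rfl, rfl⟩
    · exact Or.inl ⟨rfl, (adjn_iff hn1 (i - 1) i).2 rfl⟩
    · unfold upF
      dsimp only
      rw [fin2_val_add_one]
      split_ifs <;> omega
    · unfold upF
      dsimp only
      rw [sub_one_val hn1]
      by_cases h : (i : ℕ) = 0
      · rw [if_pos h]; split_ifs <;> omega
      · rw [if_neg h]; split_ifs <;> omega

private lemma upF_sum {n : ℕ} [NeZero n] (hn : 3 ≤ n) (hodd : Odd n) :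
    ∑ v, upF n v = n + 1 := by
  have hmod : n % 2 = 1 := Nat.odd_iff.mp hodd
  rw [Fintype.sum_prod_type, Fin.sum_univ_two, ← Finset.sum_add_distrib]
  have hpt : ∀ i : Fin n, upF n (0, i) + upF n (1, i)
      = 1 + (if i = (⟨n - 1, by omega⟩ : Fin n) then 1 else 0) := by
    intro i
    unfold upF
    simp only [Fin.val_zero, Fin.val_one, Fin.ext_iff, Fin.val_mk]
    norm_num
    split_ifs <;> omega
  rw [Finset.sum_congr rfl (fun i _ => hpt i), Finset.sum_add_distrib,
    Finset.sum_const, Finset.card_univ, Fintype.card_fin, smul_eq_mul, mul_one,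
    Finset.sum_ite_eq' Finset.univ (⟨n - 1, by omega⟩ : Fin n) (fun _ => 1),
    if_pos (Finset.mem_univ _)]

end AuxUp

theorem stmt6 (n : ℕ) (hn : 3 ≤ n) (hodd : Odd n) :
    italianDomNum (Fin 2 × Fin n) (cartAdj (cycleAdj 2) (cycleAdj n)) = n + 1 := by
  haveI : NeZero n := ⟨by omega⟩
  unfold italianDomNum
  apply le_antisymm
  · exact Nat.sInf_le ⟨upF n, upF_isIDF hn hodd, upF_sum hn hodd⟩
  · refine le_csInf ⟨n + 1, ⟨upF n, upF_isIDF hn hodd, upF_sum hn hodd⟩⟩ ?_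
    rintro w ⟨f, hf, rfl⟩
    exact lowerBdd hn hodd hf
end

section
/- For an odd integer n ≥ 3, γ_I(C₂ □ C_n) ≤ n + 1; explicitly, the function f with f((1, 2j−1)) = 1 for 1 ≤ j ≤ (n+1)/2, f((2, 2j)) = 1 for 1 ≤ j ≤ (n−1)/2, f((2, n)) = 1, and f = 0 otherwise, is an Italian dominating function of C₂ □ C_n of weight n + 1. -/
lemma sum_even_aux (n : ℕ) :
    ∑ i ∈ Finset.range n, (if i % 2 = 0 then (1:ℕ) else 0) = (n+1)/2 := by
  induction n with
  | zero => simp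
  | succ k ih => rw [Finset.sum_range_succ, ih]; split <;> omega

lemma sum_odd_aux (n : ℕ) :
    ∑ i ∈ Finset.range n, (if i % 2 = 1 then (1:ℕ) else 0) = n/2 := by
  induction n with
  | zero => simp
  | succ k ih => rw [Finset.sum_range_succ, ih]; split <;> omega

theorem stmt7 (n : ℕ) (hn : 3 ≤ n) (hodd : Odd n) :
    (IsIDF (cartAdj (cycleAdj 2) (cycleAdj n))
      (fun p : Fin 2 × Fin n =>
        if ((p.1 : ℕ) = 0 ∧ (p.2 : ℕ) % 2 = 0) ∨
           ((p.1 : ℕ) = 1 ∧ ((p.2 : ℕ) % 2 = 1 ∨ (p.2 : ℕ) = n - 1)) then 1 else 0) ∧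
    (∑ p : Fin 2 × Fin n,
        if ((p.1 : ℕ) = 0 ∧ (p.2 : ℕ) % 2 = 0) ∨
           ((p.1 : ℕ) = 1 ∧ ((p.2 : ℕ) % 2 = 1 ∨ (p.2 : ℕ) = n - 1)) then 1 else 0) = n + 1) ∧
    italianDomNum (Fin 2 × Fin n) (cartAdj (cycleAdj 2) (cycleAdj n)) ≤ n + 1 := by
  obtain ⟨m, hm⟩ := hodd
  have hn0 : 0 < n := by omega
  set f : Fin 2 × Fin n → ℕ := fun p =>
        if ((p.1 : ℕ) = 0 ∧ (p.2 : ℕ) % 2 = 0) ∨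
           ((p.1 : ℕ) = 1 ∧ ((p.2 : ℕ) % 2 = 1 ∨ (p.2 : ℕ) = n - 1)) then 1 else 0 with hf
  have hidf : IsIDF (cartAdj (cycleAdj 2) (cycleAdj n)) f := by
    constructor
    · intro v; rw [hf]; dsimp only; split <;> omega
    · rintro ⟨r, i⟩ hv
      right
      rw [hf] at hv; dsimp only at hv
      have hcond : ¬(((r : ℕ) = 0 ∧ (i : ℕ) % 2 = 0) ∨
          ((r : ℕ) = 1 ∧ ((i : ℕ) % 2 = 1 ∨ (i : ℕ) = n - 1))) := by
        intro h; rw [if_pos h] at hv; exact one_ne_zero hv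
      have hr2 : (r : ℕ) < 2 := r.isLt
      have hin : (i : ℕ) < n := i.isLt
      -- the other-row in-neighbor
      set r' : Fin 2 := ⟨1 - (r : ℕ), by omega⟩ with hr'
      -- the same-row predecessor
      set j : Fin n := if h0 : (i : ℕ) = 0 then ⟨n - 1, by omega⟩ else ⟨(i : ℕ) - 1, by omega⟩
        with hj
      have hjval : (j : ℕ) = if (i : ℕ) = 0 then n - 1 else (i : ℕ) - 1 := by
        rw [hj]; split <;> simp
      refine ⟨(r', i), (r, j), ?_, ?_, ?_, ?_, ?_⟩
      · intro h
        have := congrArg (fun p => (p.1 : ℕ)) h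
        simp only [hr'] at this
        omega
      · right
        refine ⟨?_, rfl⟩
        show (r : ℕ) = ((r' : ℕ) + 1) % 2
        simp only [hr']
        omega
      · left
        refine ⟨rfl, ?_⟩
        show (i : ℕ) = ((j : ℕ) + 1) % n
        rw [hjval]
        rcases Nat.eq_zero_or_pos (i : ℕ) with h0 | h0
        · rw [if_pos h0, Nat.sub_add_cancel (by omega), Nat.mod_self, h0]
        · rw [if_neg (by omega), Nat.sub_add_cancel (by omega), Nat.mod_eq_of_lt hin]
      · rw [hf]; dsimp only
        have hr01 : (r : ℕ) = 0 ∨ (r : ℕ) = 1 := by omega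
        refine if_pos ?_
        rcases hr01 with h | h <;> (rw [h] at hcond; simp only [hr']; rw [h])
        · exact Or.inr ⟨by omega, Or.inl (by omega)⟩
        · exact Or.inl ⟨by omega, by omega⟩
      · rw [hf]; dsimp only
        have hr01 : (r : ℕ) = 0 ∨ (r : ℕ) = 1 := by omega
        refine if_pos ?_
        rcases hr01 with h | h <;> rw [h] at hcond ⊢
        · -- r = 0, so i is odd, j = i - 1 is even
          left
          refine ⟨rfl, ?_⟩
          rw [hjval, if_neg (by omega)]
          omega
        · -- r = 1, so i even and i ≠ n - 1
          right
          refine ⟨rfl, ?_⟩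
          rw [hjval]
          rcases Nat.eq_zero_or_pos (i : ℕ) with h0 | h0
          · rw [if_pos h0]; right; rfl
          · rw [if_neg (by omega)]; left; omega
  have hsum : (∑ p : Fin 2 × Fin n, f p) = n + 1 := by
    rw [hf]
    rw [Fintype.sum_prod_type, Fin.sum_univ_two]
    have h0 : ((0 : Fin 2) : ℕ) = 0 := rfl
    have h1 : ((1 : Fin 2) : ℕ) = 1 := rfl
    have c0 : ∀ i : Fin n,
        (if (((0 : Fin 2) : ℕ) = 0 ∧ (i : ℕ) % 2 = 0) ∨
            (((0 : Fin 2) : ℕ) = 1 ∧ ((i : ℕ) % 2 = 1 ∨ (i : ℕ) = n - 1)) then (1:ℕ) else 0)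
          = if (i : ℕ) % 2 = 0 then (1:ℕ) else 0 := by
      intro i; simp
    have c1 : ∀ i : Fin n,
        (if (((1 : Fin 2) : ℕ) = 0 ∧ (i : ℕ) % 2 = 0) ∨
            (((1 : Fin 2) : ℕ) = 1 ∧ ((i : ℕ) % 2 = 1 ∨ (i : ℕ) = n - 1)) then (1:ℕ) else 0)
          = if ((i : ℕ) % 2 = 1 ∨ (i : ℕ) = n - 1) then (1:ℕ) else 0 := by
      intro i; simp
    simp only [c0, c1]
    have e1 : (∑ i : Fin n, if (i : ℕ) % 2 = 0 then (1:ℕ) else 0) = (n+1)/2 := by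
      rw [Fin.sum_univ_eq_sum_range (fun i => if i % 2 = 0 then (1:ℕ) else 0)]
      exact sum_even_aux n
    have e2 : (∑ i : Fin n, if ((i : ℕ) % 2 = 1 ∨ (i : ℕ) = n - 1) then (1:ℕ) else 0)
        = n/2 + 1 := by
      rw [Fin.sum_univ_eq_sum_range (fun i => if (i % 2 = 1 ∨ i = n - 1) then (1:ℕ) else 0)]
      have hsplit : ∀ i ∈ Finset.range n,
          (if (i % 2 = 1 ∨ i = n - 1) then (1:ℕ) else 0)
            = (if i % 2 = 1 then (1:ℕ) else 0) + (if i = n - 1 then (1:ℕ) else 0) := by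
        intro i _
        split_ifs <;> omega
      rw [Finset.sum_congr rfl hsplit, Finset.sum_add_distrib, sum_odd_aux]
      congr 1
      rw [Finset.sum_ite_eq' (Finset.range n) (n-1) (fun _ => (1:ℕ))]
      rw [if_pos (Finset.mem_range.mpr (by omega))]
    rw [e1, e2]
    omega
  refine ⟨⟨hidf, hsum⟩, ?_⟩
  exact Nat.sInf_le ⟨f, hidf, hsum⟩
end

section
/- For an odd integer n ≥ 3, there is no Italian dominating function of C₂ □ C_n of weight at most n; that is, γ_I(C₂ □ C_n) ≥ n + 1. -/
section ItalianAux

lemma cycleAdj_iff_aux {n : ℕ} [NeZero n] (h1 : 1 < n) (i j : Fin n) :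
    cycleAdj n i j ↔ j = i + 1 := by
  unfold cycleAdj
  rw [Fin.ext_iff, Fin.add_def, Fin.val_one', Nat.mod_eq_of_lt h1]

lemma inNb_aux {n : ℕ} [NeZero n] (h1 : 1 < n) (a b : Fin 2) (hab : a ≠ b) (j : Fin n)
    (w : Fin 2 × Fin n) (h : cartAdj (cycleAdj 2) (cycleAdj n) w (a, j + 1)) :
    w = (a, j) ∨ w = (b, j + 1) := by
  obtain ⟨c, k⟩ := w
  rcases h with ⟨h1', h2⟩ | ⟨h1', h2⟩
  · left
    simp only at h1' h2
    rw [cycleAdj_iff_aux h1] at h2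
    have : k = j := add_right_cancel h2.symm
    simp [h1', this]
  · right
    simp only at h1' h2
    unfold cycleAdj at h1'
    have hc : c.val < 2 := c.isLt
    have ha : a.val < 2 := a.isLt
    have hb : b.val < 2 := b.isLt
    have hab' : a.val ≠ b.val := fun h => hab (Fin.ext h)
    have : c = b := Fin.ext (by omega)
    simp [this, h2]

lemma key_aux {n : ℕ} [NeZero n] (h1 : 1 < n) (f : Fin 2 × Fin n → ℕ)
    (hf : IsIDF (cartAdj (cycleAdj 2) (cycleAdj n)) f)
    (a b : Fin 2) (hab : a ≠ b) (j : Fin n) (h0 : f (a, j + 1) = 0) :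
    2 ≤ f (a, j) + f (b, j + 1) := by
  rcases hf.2 (a, j + 1) h0 with ⟨w, hw, hw2⟩ | ⟨w₁, w₂, hne, hw1, hw2, h1', h2'⟩
  · rcases inNb_aux h1 a b hab j w hw with rfl | rfl <;> omega
  · rcases inNb_aux h1 a b hab j w₁ hw1 with rfl | rfl <;>
      rcases inNb_aux h1 a b hab j w₂ hw2 with rfl | rfl <;> simp_all

lemma noIDF_aux {n : ℕ} (hn : 3 ≤ n) (hodd : Odd n) :
    ¬ ∃ f : Fin 2 × Fin n → ℕ,
        IsIDF (cartAdj (cycleAdj 2) (cycleAdj n)) f ∧ (∑ p, f p) ≤ n := by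
  haveI : NeZero n := ⟨by omega⟩
  have h1 : 1 < n := by omega
  rintro ⟨f, hf, hsum⟩
  have h01 : (0 : Fin 2) ≠ 1 := by decide
  have h10 : (1 : Fin 2) ≠ 0 := by decide
  set s : Fin n → ℕ := fun i => f (0, i) + f (1, i) with hs
  have keyA : ∀ j : Fin n, f (0, j + 1) = 0 → 2 ≤ f (0, j) + f (1, j + 1) :=
    fun j => key_aux h1 f hf 0 1 h01 j
  have keyB : ∀ j : Fin n, f (1, j + 1) = 0 → 2 ≤ f (1, j) + f (0, j + 1) :=
    fun j => key_aux h1 f hf 1 0 h10 j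
  have h2 : ∀ j : Fin n, 2 ≤ s j + s (j + 1) := by
    intro j
    simp only [hs]
    by_cases hx : f (0, j + 1) = 0
    · have := keyA j hx
      by_cases hy : f (1, j + 1) = 0
      · have := keyB j hy; omega
      · omega
    · by_cases hy : f (1, j + 1) = 0
      · have := keyB j hy; omega
      · omega
  have h4 : ∀ j : Fin n, s (j + 1) = 0 → 4 ≤ s j := by
    intro j hz
    simp only [hs] at hz ⊢
    have hA := keyA j (by omega)
    have hB := keyB j (by omega)
    omega
  have hsum' : ∑ i, s i ≤ n := by
    rw [show ∑ i, s i = ∑ p : Fin 2 × Fin n, f p from ?_]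
    · exact hsum
    · rw [Fintype.sum_prod_type, Fin.sum_univ_two, ← Finset.sum_add_distrib]
  have hshift : ∑ j : Fin n, s (j + 1) = ∑ j, s j :=
    Fintype.sum_equiv (Equiv.addRight 1) _ _ (fun j => rfl)
  have hdouble : ∑ j : Fin n, (s j + s (j + 1)) ≤ 2 * n := by
    rw [Finset.sum_add_distrib, hshift]; omega
  have heach : ∀ j : Fin n, s j + s (j + 1) = 2 := by
    by_contra hcon
    push_neg at hcon
    obtain ⟨j0, hj0⟩ := hcon
    have hlt : ∑ j : Fin n, (2 : ℕ) < ∑ j : Fin n, (s j + s (j + 1)) :=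
      Finset.sum_lt_sum (fun i _ => h2 i) ⟨j0, Finset.mem_univ j0, by have := h2 j0; omega⟩
    rw [Finset.sum_const, Finset.card_univ, Fintype.card_fin, smul_eq_mul] at hlt
    omega
  have hpos : ∀ k : Fin n, 1 ≤ s k := by
    intro k
    have hk : k - 1 + 1 = k := sub_add_cancel k 1
    by_contra hz
    have := h4 (k - 1) (by rw [hk]; omega)
    have := heach (k - 1)
    rw [hk] at this
    omega
  have hone : ∀ j : Fin n, s j = 1 := by
    intro j
    have := heach j
    have := hpos j
    have := hpos (j + 1)
    omega
  have halt : ∀ j : Fin n, f (0, j + 1) = 1 - f (0, j) := by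
    intro j
    have hsj := hone j
    have hsj1 := hone (j + 1)
    simp only [hs] at hsj hsj1
    by_cases hx : f (0, j + 1) = 0
    · have := keyA j hx; omega
    · have hy : f (1, j + 1) = 0 := by omega
      have := keyB j hy; omega
  have hx1 : ∀ j : Fin n, f (0, j) ≤ 1 := by
    intro j; have := hone j; simp only [hs] at this; omega
  open Fin.NatCast in
  have hwalk : ∀ m : ℕ, f (0, (m : Fin n)) = (f (0, (0 : Fin n)) + m) % 2 := by
    intro m
    induction m with
    | zero =>
      simpa using (by have := hx1 (0 : Fin n); omega :
        f (0, (0 : Fin n)) = f (0, (0 : Fin n)) % 2)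
    | succ m ih =>
      rw [show ((m + 1 : ℕ) : Fin n) = (m : Fin n) + 1 by push_cast; ring, halt, ih]
      have := hx1 (0 : Fin n)
      omega
  have hfin := hwalk n
  rw [Fin.natCast_self] at hfin
  obtain ⟨k, hk⟩ := hodd
  have := hx1 (0 : Fin n)
  omega

end ItalianAux

theorem stmt8 (n : ℕ) (hn : 3 ≤ n) (hodd : Odd n) :
    (¬ ∃ f : Fin 2 × Fin n → ℕ,
        IsIDF (cartAdj (cycleAdj 2) (cycleAdj n)) f ∧ (∑ p, f p) ≤ n) ∧
    n + 1 ≤ italianDomNum (Fin 2 × Fin n) (cartAdj (cycleAdj 2) (cycleAdj n)) := by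
  refine ⟨noIDF_aux hn hodd, ?_⟩
  have hne : {w : ℕ | ∃ f : Fin 2 × Fin n → ℕ,
      IsIDF (cartAdj (cycleAdj 2) (cycleAdj n)) f ∧ ∑ v, f v = w}.Nonempty :=
    ⟨∑ _v : Fin 2 × Fin n, 2, fun _ => 2,
      ⟨fun _ => le_refl 2, fun v h => by simp at h⟩, rfl⟩
  refine le_csInf hne ?_
  rintro w ⟨g, hg, rfl⟩
  by_contra hlt
  push_neg at hlt
  exact noIDF_aux hn hodd ⟨g, hg, by omega⟩
end

section
/- For every integer n ≥ 3, the Italian domination number of the cartesian product C₃ □ C_n of directed cycles equals 2n. -/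
/- ################# auxiliary development ################# -/

def phi (a : Fin 3 → Fin 3) : ℕ := 2 + ((Finset.univ.filter fun i => a i = 0).card - 1)

lemma key : ∀ a b : Fin 3 → Fin 3,
    (∀ i, b i = 0 → 2 ≤ (b (i-1)).val + (a i).val) →
    2 + phi b ≤ (∑ i, (a i).val) + phi a := by decide

def predf {n : ℕ} (j : Fin n) : Fin n :=
  ⟨(j.val + (n-1)) % n, Nat.mod_lt _ (Nat.lt_of_le_of_lt (Nat.zero_le _) j.isLt)⟩

lemma predf_eq_sub {n : ℕ} (hn : 3 ≤ n) (j : Fin n) : predf j = j - ⟨1, by omega⟩ := by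
  rw [Fin.sub_def]
  simp [predf, Nat.add_comm]

lemma cyc_iff {n : ℕ} (hn : 3 ≤ n) (w v : Fin n) : cycleAdj n w v ↔ w = predf v := by
  unfold cycleAdj predf
  constructor
  · intro h
    apply Fin.ext
    show w.val = (v.val + (n-1)) % n
    rw [h]
    rcases Nat.lt_or_ge (w.val + 1) n with h1 | h1
    · rw [Nat.mod_eq_of_lt h1]
      have : w.val + 1 + (n-1) = w.val + n := by omega
      rw [this, Nat.add_mod_right, Nat.mod_eq_of_lt w.isLt]
    · have hw : w.val = n - 1 := by have := w.isLt; omega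
      have : w.val + 1 = n := by omega
      rw [this, Nat.mod_self, Nat.zero_add, Nat.mod_eq_of_lt (by omega), hw]
  · intro h
    rw [h]
    show v.val = ((v.val + (n-1)) % n + 1) % n
    rw [Nat.mod_add_mod]
    have : v.val + (n-1) + 1 = v.val + n := by omega
    rw [this, Nat.add_mod_right, Nat.mod_eq_of_lt v.isLt]

lemma cyc3_iff (w v : Fin 3) : cycleAdj 3 w v ↔ w = predf v := cyc_iff (le_refl 3) w v

lemma predf_val {n : ℕ} (hn : 3 ≤ n) (j : Fin n) :
    (predf j).val = if j.val = 0 then n - 1 else j.val - 1 := by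
  show (j.val + (n-1)) % n = _
  split
  · next h => rw [h, Nat.zero_add, Nat.mod_eq_of_lt (by omega)]
  · next h =>
    have h1 : j.val + (n-1) = (j.val - 1) + n := by omega
    rw [h1, Nat.add_mod_right, Nat.mod_eq_of_lt (by have := j.isLt; omega)]

lemma inNbr_s9 {n : ℕ} (hn : 3 ≤ n) (w v : Fin 3 × Fin n) :
    cartAdj (cycleAdj 3) (cycleAdj n) w v ↔
      w = (v.1, predf v.2) ∨ w = (predf v.1, v.2) := by
  unfold cartAdj
  rw [cyc_iff hn w.2 v.2, cyc_iff (le_refl 3) w.1 v.1]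
  constructor
  · rintro (⟨h1, h2⟩ | ⟨h1, h2⟩)
    · exact Or.inl (Prod.ext h1 h2)
    · exact Or.inr (Prod.ext h1 h2)
  · rintro (h | h) <;> rw [h]
    · exact Or.inl ⟨rfl, rfl⟩
    · exact Or.inr ⟨rfl, rfl⟩

lemma zero_cond {n : ℕ} (hn : 3 ≤ n) (f : Fin 3 × Fin n → ℕ)
    (hf : IsIDF (cartAdj (cycleAdj 3) (cycleAdj n)) f) (v : Fin 3 × Fin n)
    (hv : f v = 0) : 2 ≤ f (v.1, predf v.2) + f (predf v.1, v.2) := by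
  rcases hf.2 v hv with ⟨w, hw, hw2⟩ | ⟨w₁, w₂, hne, ha1, ha2, h1, h2⟩
  · rcases (inNbr_s9 hn w v).1 hw with h | h <;> rw [h] at hw2 <;> omega
  · rcases (inNbr_s9 hn w₁ v).1 ha1 with e1 | e1 <;>
      rcases (inNbr_s9 hn w₂ v).1 ha2 with e2 | e2
    · exact absurd (e1.trans e2.symm) hne
    · rw [e1] at h1; rw [e2] at h2; omega
    · rw [e1] at h1; rw [e2] at h2; omega
    · exact absurd (e1.trans e2.symm) hne

lemma lower {n : ℕ} (hn : 3 ≤ n) (f : Fin 3 × Fin n → ℕ)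
    (hf : IsIDF (cartAdj (cycleAdj 3) (cycleAdj n)) f) :
    2 * n ≤ ∑ v, f v := by
  have hb := hf.1
  set c : Fin n → Fin 3 → Fin 3 := fun j i => ⟨f (i, j), by have := hb (i, j); omega⟩
    with hc
  have hpred3 : ∀ i : Fin 3, predf i = i - 1 := by decide
  have hcon : ∀ j i, c j i = 0 → 2 ≤ (c j (i-1)).val + (c (predf j) i).val := by
    intro j i h0
    have hf0 : f (i, j) = 0 := congrArg Fin.val h0
    have h2 := zero_cond hn f hf (i, j) hf0
    show 2 ≤ f (i - 1, j) + f (i, predf j)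
    rw [← hpred3 i]
    simpa [Nat.add_comm] using h2
  have hkey : ∀ j, 2 + phi (c j) ≤ (∑ i, (c (predf j) i).val) + phi (c (predf j)) :=
    fun j => key (c (predf j)) (c j) (hcon j)
  have hsum := Finset.sum_le_sum (fun j (_ : j ∈ Finset.univ) => hkey j)
  rw [Finset.sum_add_distrib, Finset.sum_add_distrib] at hsum
  have hreindex : ∀ F : Fin n → ℕ, ∑ j, F (predf j) = ∑ j, F j := by
    intro F
    haveI : NeZero n := ⟨by omega⟩
    have hbij : Function.Bijective (fun j : Fin n => predf j) := by
      have : (fun j : Fin n => predf j) = fun j => j - ⟨1, by omega⟩ := by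
        funext j; exact predf_eq_sub hn j
      rw [this]
      exact (Equiv.subRight (⟨1, by omega⟩ : Fin n)).bijective
    exact Fintype.sum_bijective _ hbij _ _ (fun j => rfl)
  rw [hreindex (fun j => ∑ i, (c j i).val), hreindex (fun j => phi (c j))] at hsum
  have hcard : ∑ _j : Fin n, 2 = 2 * n := by
    rw [Finset.sum_const, Finset.card_univ, Fintype.card_fin]
    ring
  have htot : ∑ v : Fin 3 × Fin n, f v = ∑ j : Fin n, ∑ i : Fin 3, (c j i).val := by
    rw [Fintype.sum_prod_type]
    exact Finset.sum_comm
  omega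

def zfun (n : ℕ) (j : Fin n) : Fin 3 :=
  ⟨if (j : ℕ) = n - 1 then 2 else (j : ℕ) % 2, by split <;> omega⟩

lemma zfun_ne {n : ℕ} (hn : 3 ≤ n) (j : Fin n) : zfun n (predf j) ≠ zfun n j := by
  intro h
  have hv : (if ((predf j : Fin n) : ℕ) = n - 1 then 2 else ((predf j : Fin n) : ℕ) % 2)
      = (if (j : ℕ) = n - 1 then 2 else (j : ℕ) % 2) := congrArg Fin.val h
  have hp := predf_val hn j
  have hjlt := j.isLt
  rw [hp] at hv
  split_ifs at hv <;> omega

lemma gfun_isIDF {n : ℕ} (hn : 3 ≤ n) :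
    IsIDF (cartAdj (cycleAdj 3) (cycleAdj n))
      (fun p : Fin 3 × Fin n => if p.1 = zfun n p.2 then 0 else 1) := by
  constructor
  · intro v; dsimp only; split <;> omega
  · intro v hv
    have hz : v.1 = zfun n v.2 := by
      by_contra hne
      simp only [if_neg hne] at hv
      exact one_ne_zero hv
    right
    refine ⟨(predf v.1, v.2), (v.1, predf v.2), ?_, ?_, ?_, ?_, ?_⟩
    · intro h
      have := congrArg Prod.fst h
      have h3 : ∀ i : Fin 3, predf i ≠ i := by decide
      exact h3 v.1 this
    · exact (inNbr_s9 hn _ v).2 (Or.inr rfl)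
    · exact (inNbr_s9 hn _ v).2 (Or.inl rfl)
    · have h3 : ∀ i : Fin 3, predf i ≠ i := by decide
      have : predf v.1 ≠ zfun n v.2 := by rw [← hz]; exact h3 v.1
      simp only [if_neg this]
    · have : v.1 ≠ zfun n (predf v.2) := by rw [hz]; exact (zfun_ne hn v.2).symm
      simp only [if_neg this]

lemma gfun_sum {n : ℕ} (hn : 3 ≤ n) :
    ∑ p : Fin 3 × Fin n, (if p.1 = zfun n p.2 then 0 else 1) = 2 * n := by
  rw [Fintype.sum_prod_type, Finset.sum_comm]
  have h1 : ∀ z : Fin 3, ∑ i : Fin 3, (if i = z then 0 else 1) = 2 := by decide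
  calc ∑ j : Fin n, ∑ i : Fin 3, (if i = zfun n j then 0 else 1)
      = ∑ _j : Fin n, 2 := Finset.sum_congr rfl (fun j _ => h1 (zfun n j))
    _ = 2 * n := by rw [Finset.sum_const, Finset.card_univ, Fintype.card_fin]; ring

theorem stmt9 (n : ℕ) (hn : 3 ≤ n) :
    italianDomNum (Fin 3 × Fin n) (cartAdj (cycleAdj 3) (cycleAdj n)) = 2 * n := by
  have hmem : 2 * n ∈ {w : ℕ | ∃ f : Fin 3 × Fin n → ℕ,
      IsIDF (cartAdj (cycleAdj 3) (cycleAdj n)) f ∧ ∑ v, f v = w} :=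
    ⟨_, gfun_isIDF hn, gfun_sum hn⟩
  apply le_antisymm
  · exact Nat.sInf_le hmem
  · obtain ⟨f, hf, hw⟩ := Nat.sInf_mem ⟨2 * n, hmem⟩
    rw [italianDomNum, ← hw]
    exact lower hn f hf
end

section
/- For every integer n ≥ 3 divisible by 3, the function f₀ on V(C₃ □ C_n) defined by f₀((1,3j+1)) = f₀((2,3j+1)) = 1, f₀((2,3j+2)) = f₀((3,3j+2)) = 1, f₀((1,3j+3)) = f₀((3,3j+3)) = 1 for each 0 ≤ j ≤ n/3 − 1, and f₀ = 0 otherwise, is an Italian dominating function of C₃ □ C_n of weight 2n. -/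
theorem stmt10 (n : ℕ) (hn : 3 ≤ n) (hdvd : 3 ∣ n) :
    IsIDF (cartAdj (cycleAdj 3) (cycleAdj n))
      (fun p : Fin 3 × Fin n =>
        if ((p.2 : ℕ) % 3 = 0 ∧ ((p.1 : ℕ) = 0 ∨ (p.1 : ℕ) = 1)) ∨
           ((p.2 : ℕ) % 3 = 1 ∧ ((p.1 : ℕ) = 1 ∨ (p.1 : ℕ) = 2)) ∨
           ((p.2 : ℕ) % 3 = 2 ∧ ((p.1 : ℕ) = 0 ∨ (p.1 : ℕ) = 2)) then 1 else 0) ∧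
    (∑ p : Fin 3 × Fin n,
        if ((p.2 : ℕ) % 3 = 0 ∧ ((p.1 : ℕ) = 0 ∨ (p.1 : ℕ) = 1)) ∨
           ((p.2 : ℕ) % 3 = 1 ∧ ((p.1 : ℕ) = 1 ∨ (p.1 : ℕ) = 2)) ∨
           ((p.2 : ℕ) % 3 = 2 ∧ ((p.1 : ℕ) = 0 ∨ (p.1 : ℕ) = 2)) then 1 else 0) = 2 * n := by
  constructor
  · constructor
    · intro v; dsimp only; split <;> omega
    · rintro ⟨a, b⟩ hv
      dsimp only at hv
      by_cases hc : ((b : ℕ) % 3 = 0 ∧ ((a : ℕ) = 0 ∨ (a : ℕ) = 1)) ∨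
           ((b : ℕ) % 3 = 1 ∧ ((a : ℕ) = 1 ∨ (a : ℕ) = 2)) ∨
           ((b : ℕ) % 3 = 2 ∧ ((a : ℕ) = 0 ∨ (a : ℕ) = 2))
      · rw [if_pos hc] at hv; exact absurd hv one_ne_zero
      clear hv
      have hb := b.isLt
      have ha := a.isLt
      have hn0 : 0 < n := by omega
      set prev : Fin n := ⟨((b : ℕ) + n - 1) % n, Nat.mod_lt _ hn0⟩ with hprev
      set pa : Fin 3 := ⟨((a : ℕ) + 2) % 3, Nat.mod_lt _ (by omega)⟩ with hpa
      have hpav : (pa : ℕ) = ((a : ℕ) + 2) % 3 := rfl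
      have hprevv : (prev : ℕ) = ((b : ℕ) + n - 1) % n := rfl
      have hprev3 : ((prev : ℕ)) % 3 = ((b : ℕ) + 2) % 3 := by
        rw [hprevv, Nat.mod_mod_of_dvd _ hdvd]
        omega
      right
      refine ⟨(a, prev), (pa, b), ?_, Or.inl ⟨rfl, ?_⟩, Or.inr ⟨?_, rfl⟩, ?_, ?_⟩
      · intro h
        have := congrArg (fun p => ((p.1 : Fin 3) : ℕ)) h
        simp only [hpav] at this
        omega
      · show (b : ℕ) = ((prev : ℕ) + 1) % n
        rw [hprevv, Nat.mod_add_mod]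
        have h1 : (b : ℕ) + n - 1 + 1 = (b : ℕ) + n := by omega
        rw [h1, Nat.add_mod_right, Nat.mod_eq_of_lt hb]
      · show (a : ℕ) = ((pa : ℕ) + 1) % 3
        rw [hpav]; omega
      · show (if ((prev : ℕ) % 3 = 0 ∧ ((a : ℕ) = 0 ∨ (a : ℕ) = 1)) ∨
           ((prev : ℕ) % 3 = 1 ∧ ((a : ℕ) = 1 ∨ (a : ℕ) = 2)) ∨
           ((prev : ℕ) % 3 = 2 ∧ ((a : ℕ) = 0 ∨ (a : ℕ) = 2)) then 1 else 0) = 1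
        rw [if_pos]
        omega
      · show (if ((b : ℕ) % 3 = 0 ∧ ((pa : ℕ) = 0 ∨ (pa : ℕ) = 1)) ∨
           ((b : ℕ) % 3 = 1 ∧ ((pa : ℕ) = 1 ∨ (pa : ℕ) = 2)) ∨
           ((b : ℕ) % 3 = 2 ∧ ((pa : ℕ) = 0 ∨ (pa : ℕ) = 2)) then 1 else 0) = 1
        rw [if_pos]
        rw [hpav]
        omega
  · rw [Fintype.sum_prod_type_right]
    have key : ∀ b : Fin n, (∑ a : Fin 3,
        if ((b : ℕ) % 3 = 0 ∧ ((a : ℕ) = 0 ∨ (a : ℕ) = 1)) ∨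
           ((b : ℕ) % 3 = 1 ∧ ((a : ℕ) = 1 ∨ (a : ℕ) = 2)) ∨
           ((b : ℕ) % 3 = 2 ∧ ((a : ℕ) = 0 ∨ (a : ℕ) = 2)) then 1 else 0) = 2 := by
      intro b
      rw [Fin.sum_univ_three]
      simp only [show ((0:Fin 3):ℕ) = 0 from rfl, show ((1:Fin 3):ℕ) = 1 from rfl,
        show ((2:Fin 3):ℕ) = 2 from rfl]
      split_ifs <;> simp_all <;> omega
    simp only [key, Finset.sum_const, Finset.card_univ, Fintype.card_fin, smul_eq_mul]
    ring
end

section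
/- Let n ≥ 3 and let f be a minimum-weight Italian dominating function of C₃ □ C_n. For 1 ≤ k ≤ n let a_k = Σ_{j=1}^{3} f((j,k)). Then a_k ≥ 1 for every k. -/
lemma cyc_iff_s11 {n : ℕ} [NeZero n] (hn : 2 ≤ n) (a c : Fin n) :
    cycleAdj n a c ↔ c = a + 1 := by
  unfold cycleAdj
  rw [Fin.ext_iff, Fin.val_add, Fin.val_one', Nat.mod_eq_of_lt (show 1 < n by omega)]

lemma sub_one_ne {n : ℕ} [NeZero n] (hn : 2 ≤ n) (k : Fin n) : k - 1 ≠ k := by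
  intro h
  have h1 : (1 : Fin n) = 0 := sub_eq_self.mp h
  have := congrArg Fin.val h1
  rw [Fin.val_one', Nat.mod_eq_of_lt (show 1 < n by omega)] at this
  simp at this

/-- the modified function -/
def tweak {V : Type*} [DecidableEq V] (f : V → ℕ) (a b : V) : V → ℕ :=
  fun p => if p = a then 0 else if p = b then 1 else f p

theorem stmt11 (n : ℕ) (hn : 3 ≤ n) (f : Fin 3 × Fin n → ℕ)
    (hf : IsIDF (cartAdj (cycleAdj 3) (cycleAdj n)) f)
    (hmin : (∑ p, f p) = italianDomNum (Fin 3 × Fin n) (cartAdj (cycleAdj 3) (cycleAdj n))) :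
    ∀ k : Fin n, 1 ≤ ∑ j : Fin 3, f (j, k) := by
  haveI : NeZero n := ⟨by omega⟩
  have h2n : (2 : ℕ) ≤ n := by omega
  intro k
  by_contra hcon
  push_neg at hcon
  -- column k is all zeros
  have hcol : ∀ j : Fin 3, f (j, k) = 0 := by
    intro j
    have h3 : ∑ j : Fin 3, f (j, k) = 0 := by omega
    rw [Finset.sum_eq_zero_iff] at h3
    exact h3 j (Finset.mem_univ j)
  -- adjacency characterization
  have hadj_iff : ∀ w v : Fin 3 × Fin n,
      cartAdj (cycleAdj 3) (cycleAdj n) w v ↔ (v = (w.1, w.2 + 1) ∨ v = (w.1 + 1, w.2)) := by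
    intro w v
    unfold cartAdj
    rw [cyc_iff_s11 h2n, cyc_iff_s11 (by norm_num : (2:ℕ) ≤ 3)]
    constructor
    · rintro (⟨h1, h2⟩ | ⟨h1, h2⟩)
      · left; rw [Prod.ext_iff]; exact ⟨h1.symm, h2⟩
      · right; rw [Prod.ext_iff]; exact ⟨h1, h2.symm⟩
    · rintro (rfl | rfl)
      · exact Or.inl ⟨rfl, rfl⟩
      · exact Or.inr ⟨rfl, rfl⟩
  -- column k-1 is all twos
  have key : ∀ j : Fin 3, f (j, k - 1) = 2 := by
    intro j
    have hinw : ∀ w : Fin 3 × Fin n, cartAdj (cycleAdj 3) (cycleAdj n) w (j, k) →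
        f w ≠ 0 → w = (j, k - 1) := by
      intro w hadj hw0
      rcases (hadj_iff w (j, k)).1 hadj with h | h
      · obtain ⟨e1, e2⟩ := Prod.ext_iff.1 h
        have e2' : w.2 = k - 1 := eq_sub_iff_add_eq.mpr e2.symm
        exact Prod.ext e1.symm e2'
      · exfalso
        obtain ⟨e1, e2⟩ := Prod.ext_iff.1 h
        have e1' : w.1 = j - 1 := eq_sub_iff_add_eq.mpr e1.symm
        have : w = (j - 1, k) := Prod.ext e1' e2.symm
        rw [this] at hw0
        exact hw0 (hcol (j - 1))
    rcases hf.2 (j, k) (hcol j) with ⟨w, hadj, hw⟩ | ⟨w₁, w₂, hne, ha1, ha2, h1, h2⟩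
    · have := hinw w hadj (by omega)
      rwa [this] at hw
    · exact absurd ((hinw w₁ ha1 (by omega)).trans (hinw w₂ ha2 (by omega)).symm) hne
  -- the tweak
  set a : Fin 3 × Fin n := (2, k - 1) with ha
  set b : Fin 3 × Fin n := (2, k) with hb
  have hab : a ≠ b := by
    intro h
    exact sub_one_ne h2n k (congrArg Prod.snd h)
  set g := tweak f a b with hg
  have hga : g a = 0 := by simp [hg, tweak]
  have hgb : g b = 1 := by simp [hg, tweak, hab.symm, Ne.symm hab]
  have hgoth : ∀ p, p ≠ a → p ≠ b → g p = f p := by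
    intro p h1 h2; simp [hg, tweak, h1, h2]
  have hgIDF : IsIDF (cartAdj (cycleAdj 3) (cycleAdj n)) g := by
    constructor
    · intro v
      by_cases h1 : v = a
      · rw [h1, hga]; omega
      by_cases h2 : v = b
      · rw [h2, hgb]; omega
      · rw [hgoth v h1 h2]; exact hf.1 v
    · intro v hv
      by_cases hva : v = a
      · -- witness (1, k-1) with value 2
        subst hva
        left
        refine ⟨((1 : Fin 3), k - 1), ?_, ?_⟩
        · apply (hadj_iff _ _).2
          right
          exact Prod.ext (show (2:Fin 3) = 1 + 1 by decide) rfl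
        · rw [hgoth _ (by simp [ha, Prod.ext_iff]) (by simp [hb, Prod.ext_iff, Ne.symm (sub_one_ne h2n k)])]
          exact key 1
      by_cases hvb : v = b
      · rw [hvb, hgb] at hv; exact absurd hv one_ne_zero
      have hfv : f v = 0 := by rwa [hgoth v hva hvb] at hv
      rcases hf.2 v hfv with ⟨w, hadj, hw⟩ | ⟨w₁, w₂, hne, ha1, ha2, h1, h2⟩
      · by_cases hwa : w = a
        · subst hwa
          exfalso
          rcases (hadj_iff _ v).1 hadj with h | h
          · apply hvb
            rw [h, hb]
            exact Prod.ext rfl (sub_add_cancel k 1)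
          · have hv0 : v = ((0 : Fin 3), k - 1) := by
              rw [h]; exact Prod.ext (show (2:Fin 3) + 1 = 0 by decide) rfl
            rw [hv0, key 0] at hfv
            exact absurd hfv (by omega)
        by_cases hwb : w = b
        · subst hwb
          rw [hb, hcol 2] at hw
          exact absurd hw (by omega)
        · exact Or.inl ⟨w, hadj, by rwa [hgoth w hwa hwb]⟩
      · right
        have gone : ∀ w, f w = 1 → g w = 1 := by
          intro w hw1
          have hwa : w ≠ a := by rintro rfl; rw [ha] at hw1; rw [key 2] at hw1; omega
          have hwb : w ≠ b := by rintro rfl; rw [hb, hcol 2] at hw1; omega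
          rwa [hgoth w hwa hwb]
        exact ⟨w₁, w₂, hne, ha1, ha2, gone w₁ h1, gone w₂ h2⟩
  -- weight comparison
  have hsum : ∑ p, f p + 1 = ∑ p, g p + 2 := by
    have hpt : ∀ p, f p + (if p = b then 1 else 0) = g p + (if p = a then 2 else 0) := by
      intro p
      by_cases hpa : p = a
      · subst hpa
        rw [if_neg hab, if_pos rfl, hga, ha, key 2]
      by_cases hpb : p = b
      · subst hpb
        rw [if_pos rfl, if_neg (Ne.symm hab), hgb, hb, hcol 2]
      · rw [if_neg hpa, if_neg hpb, hgoth p hpa hpb]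
    have hS := Finset.sum_congr rfl (fun p (_ : p ∈ Finset.univ) => hpt p)
    rw [Finset.sum_add_distrib, Finset.sum_add_distrib] at hS
    simpa [Finset.sum_ite_eq'] using hS
  have hmem : (∑ p, g p) ∈ {w : ℕ | ∃ f : Fin 3 × Fin n → ℕ,
      IsIDF (cartAdj (cycleAdj 3) (cycleAdj n)) f ∧ ∑ v, f v = w} := ⟨g, hgIDF, rfl⟩
  have hle : italianDomNum (Fin 3 × Fin n) (cartAdj (cycleAdj 3) (cycleAdj n)) ≤ ∑ p, g p :=
    Nat.sInf_le hmem
  rw [← hmin] at hle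
  omega
end

section
/- For integers m, n ≥ 2, the Italian domination number of the strong product of directed cycles satisfies γ_I(C_m ⊗ C_n) ≥ ⌈mn/2⌉. -/
lemma cyc_iff_s12 {k : ℕ} [NeZero k] (hk : 2 ≤ k) (i j : Fin k) :
    cycleAdj k i j ↔ i = j - 1 := by
  have h1 : ((1 : Fin k) : ℕ) = 1 := by
    rw [Fin.val_one']
    exact Nat.mod_eq_of_lt hk
  unfold cycleAdj
  rw [eq_sub_iff_add_eq]
  constructor
  · intro h
    apply Fin.ext
    rw [Fin.val_add, h1]
    exact h.symm
  · intro h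
    rw [← h, Fin.val_add, h1]

lemma adj_char {m n : ℕ} [NeZero m] [NeZero n] (hm : 2 ≤ m) (hn : 2 ≤ n)
    (w v : Fin m × Fin n) :
    strongAdj (cycleAdj m) (cycleAdj n) w v ↔
      w = (v.1 - 1, v.2 - 1) ∨ w = (v.1, v.2 - 1) ∨ w = (v.1 - 1, v.2) := by
  simp only [strongAdj, cyc_iff_s12 hm, cyc_iff_s12 hn, Prod.ext_iff]

lemma key_s12 {m n : ℕ} [NeZero m] [NeZero n] (hm : 2 ≤ m) (hn : 2 ≤ n)
    (f : Fin m × Fin n → ℕ)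
    (hf : IsIDF (strongAdj (cycleAdj m) (cycleAdj n)) f)
    (i : Fin m) (j : Fin n) (h0 : f (i, j + 1) = 0) :
    2 ≤ f (i - 1, j) + f (i, j) + f (i - 1, j + 1) := by
  have hjj : j + 1 - 1 = j := add_sub_cancel_right j 1
  rcases hf.2 (i, j + 1) h0 with ⟨w, hadj, hw⟩ | ⟨w₁, w₂, hne, ha1, ha2, h1, h2⟩
  · rw [adj_char hm hn] at hadj
    simp only [hjj] at hadj
    rcases hadj with h | h | h <;> rw [h] at hw <;> omega
  · rw [adj_char hm hn] at ha1 ha2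
    simp only [hjj] at ha1 ha2
    rcases ha1 with h | h | h <;> rcases ha2 with h' | h' | h' <;>
      rw [h] at h1 <;> rw [h'] at h2 <;> rw [h, h'] at hne <;>
      first | exact absurd rfl hne | omega

lemma cyclic_sum {m : ℕ} [NeZero m] (c : Fin m → ℕ)
    (h : ∀ i, c i = 0 → 2 ≤ c (i - 1)) : m ≤ ∑ i, c i := by
  set d : Fin m → ℕ := fun i => if c i = 0 then 1 else 0 with hd
  have step : ∀ i : Fin m, 1 + d (i + 1) ≤ c i + d i := by
    intro i
    have hcan : i + 1 - 1 = i := add_sub_cancel_right i 1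
    by_cases h0 : c i = 0
    · have h1 : c (i + 1) ≠ 0 := by
        intro h1
        have := h (i + 1) h1
        rw [hcan] at this
        omega
      simp [hd, h0, h1]
    · by_cases h1 : c (i + 1) = 0
      · have := h (i + 1) h1
        rw [hcan] at this
        simp only [hd, h0, h1, if_true, if_false]
        omega
      · simp only [hd, h0, h1, if_false]
        omega
  have hsum := Finset.sum_le_sum (fun i (_ : i ∈ Finset.univ) => step i)
  have hshift : ∑ i : Fin m, d (i + 1) = ∑ i : Fin m, d i :=
    Fintype.sum_equiv (Equiv.addRight 1) _ _ (fun i => rfl)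
  rw [Finset.sum_add_distrib, Finset.sum_add_distrib, hshift, Finset.sum_const,
    Finset.card_univ, Fintype.card_fin, smul_eq_mul, mul_one] at hsum
  omega

lemma weight_bound {m n : ℕ} (hm : 2 ≤ m) (hn : 2 ≤ n) (f : Fin m × Fin n → ℕ)
    (hf : IsIDF (strongAdj (cycleAdj m) (cycleAdj n)) f) :
    m * n ≤ 2 * ∑ v, f v := by
  haveI : NeZero m := ⟨by omega⟩
  haveI : NeZero n := ⟨by omega⟩
  have hcol : ∀ j : Fin n, m ≤ ∑ i : Fin m, (f (i, j) + f (i, j + 1)) := by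
    intro j
    apply cyclic_sum
    intro i hci
    have hij : f (i, j + 1) = 0 := by omega
    have := key_s12 hm hn f hf i j hij
    omega
  have htot : n * m ≤ ∑ j : Fin n, ∑ i : Fin m, (f (i, j) + f (i, j + 1)) := by
    calc n * m = ∑ _j : Fin n, m := by
          rw [Finset.sum_const, Finset.card_univ, Fintype.card_fin, smul_eq_mul]
    _ ≤ _ := Finset.sum_le_sum (fun j _ => hcol j)
  have hsplit : ∑ j : Fin n, ∑ i : Fin m, (f (i, j) + f (i, j + 1))
      = (∑ j : Fin n, ∑ i : Fin m, f (i, j)) + ∑ j : Fin n, ∑ i : Fin m, f (i, j + 1) := by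
    rw [← Finset.sum_add_distrib]
    exact Finset.sum_congr rfl (fun j _ => Finset.sum_add_distrib)
  have hshift : ∑ j : Fin n, ∑ i : Fin m, f (i, j + 1) = ∑ j : Fin n, ∑ i : Fin m, f (i, j) :=
    Fintype.sum_equiv (Equiv.addRight 1) _ _ (fun j => rfl)
  have hfub : ∑ v : Fin m × Fin n, f v = ∑ j : Fin n, ∑ i : Fin m, f (i, j) := by
    rw [Fintype.sum_prod_type]
    exact Finset.sum_comm
  rw [hsplit, hshift] at htot
  rw [hfub, mul_comm m n]
  omega

theorem stmt12 (m n : ℕ) (hm : 2 ≤ m) (hn : 2 ≤ n) :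
    italianDomNum (Fin m × Fin n) (strongAdj (cycleAdj m) (cycleAdj n)) ≥ (m * n + 1) / 2 := by
  have hne : {w : ℕ | ∃ f : Fin m × Fin n → ℕ,
      IsIDF (strongAdj (cycleAdj m) (cycleAdj n)) f ∧ ∑ v, f v = w}.Nonempty := by
    refine ⟨m * n, fun _ => 1, ⟨fun v => one_le_two, fun v hv => absurd hv one_ne_zero⟩, ?_⟩
    simp [Finset.card_univ]
  obtain ⟨f, hf, hw⟩ := Nat.sInf_mem hne
  have := weight_bound hm hn f hf
  rw [ge_iff_le, italianDomNum, ← hw]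
  set W := ∑ v, f v
  clear hw hne hf
  omega
end

section
/- For all integers m, n ≥ 2, the Italian domination number of the strong product of directed cycles equals γ_I(C_m ⊗ C_n) = ⌈mn/2⌉. -/
/-! ### Auxiliary machinery -/

/-- Predecessor on `Fin k` (subtract one mod `k`). -/
def fpred {k : ℕ} (i : Fin k) : Fin k :=
  ⟨(i.val + (k - 1)) % k, Nat.mod_lt _ i.pos⟩

lemma fpred_adj {k : ℕ} (i : Fin k) : cycleAdj k (fpred i) i := by
  have hk : 0 < k := i.pos
  show (i : ℕ) = ((i.val + (k - 1)) % k + 1) % k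
  rw [Nat.mod_add_mod]
  have h1 : i.val + (k - 1) + 1 = i.val + k := by omega
  rw [h1, Nat.add_mod_right, Nat.mod_eq_of_lt i.isLt]

lemma succ_mod_inj {k x y : ℕ} (hx : x < k) (hy : y < k)
    (h : (x + 1) % k = (y + 1) % k) : x = y := by
  rcases Nat.lt_or_ge (x + 1) k with h1 | h1
  · rw [Nat.mod_eq_of_lt h1] at h
    rcases Nat.lt_or_ge (y + 1) k with h2 | h2
    · rw [Nat.mod_eq_of_lt h2] at h; omega
    · have hy1 : y + 1 = k := by omega
      rw [hy1, Nat.mod_self] at h; omega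
  · have hx1 : x + 1 = k := by omega
    rw [hx1, Nat.mod_self] at h
    rcases Nat.lt_or_ge (y + 1) k with h2 | h2
    · rw [Nat.mod_eq_of_lt h2] at h; omega
    · omega

lemma adj_eq_fpred {k : ℕ} {x i : Fin k} (h : cycleAdj k x i) : x = fpred i := by
  have h1 : (i : ℕ) = (x.val + 1) % k := h
  have h2 : (i : ℕ) = ((fpred i).val + 1) % k := fpred_adj i
  exact Fin.ext (succ_mod_inj x.isLt (fpred i).isLt (h1.symm.trans h2))

lemma fpred_ne {k : ℕ} (hk : 2 ≤ k) (i : Fin k) : fpred i ≠ i := by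
  intro h
  have h1 : (i : ℕ) = ((fpred i).val + 1) % k := fpred_adj i
  rw [h] at h1
  rcases Nat.lt_or_ge (i.val + 1) k with h2 | h2
  · rw [Nat.mod_eq_of_lt h2] at h1; omega
  · have : i.val + 1 = k := by have := i.isLt; omega
    rw [this, Nat.mod_self] at h1
    have := i.isLt; omega

lemma fpred_bij {k : ℕ} : Function.Bijective (fpred (k := k)) := by
  have hinj : Function.Injective (fpred (k := k)) := by
    intro x y h
    have hx : (x : ℕ) = ((fpred x).val + 1) % k := fpred_adj x
    have hy : (y : ℕ) = ((fpred y).val + 1) % k := fpred_adj y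
    rw [h] at hx
    exact Fin.ext (hx.trans hy.symm)
  exact Finite.injective_iff_bijective.mp hinj

lemma fpred_val {k : ℕ} (i : Fin k) :
    (fpred i).val = if i.val = 0 then k - 1 else i.val - 1 := by
  have hk : 0 < k := i.pos
  show (i.val + (k - 1)) % k = _
  split
  · rename_i h; rw [h]; simpa using Nat.mod_eq_of_lt (by omega)
  · rename_i h
    have h1 : i.val + (k - 1) = (i.val - 1) + k := by omega
    rw [h1, Nat.add_mod_right, Nat.mod_eq_of_lt (by have := i.isLt; omega)]

/-- The checkerboard function for the upper bound. -/
def chk {m n : ℕ} (v : Fin m × Fin n) : ℕ :=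
  if (v.1.val + v.2.val) % 2 = 0 then 1 else 0

lemma chk_one {m n : ℕ} {x : Fin m} {y : Fin n}
    (h : (x.val + y.val) % 2 = 0) : chk (x, y) = 1 := if_pos h

lemma row_sum (c : ℕ) : ∀ n : ℕ,
    (∑ j ∈ Finset.range n, if (c + j) % 2 = 0 then 1 else 0) = (n + 1 - c % 2) / 2 := by
  intro n
  induction n with
  | zero => simp; omega
  | succ n ih =>
    rw [Finset.sum_range_succ, ih]
    split <;> omega

lemma col_sum (n : ℕ) : ∀ m : ℕ,
    (∑ i ∈ Finset.range m, (n + 1 - i % 2) / 2) = (m * n + 1) / 2 := by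
  intro m
  induction m with
  | zero => simp
  | succ m ih =>
    rw [Finset.sum_range_succ, ih]
    have h1 : (m + 1) * n = m * n + n := by ring
    have h2 : m * n % 2 = m % 2 * (n % 2) % 2 := Nat.mul_mod m n 2
    rcases Nat.mod_two_eq_zero_or_one m with hm2 | hm2 <;>
      rcases Nat.mod_two_eq_zero_or_one n with hn2 | hn2 <;>
      rw [hm2, hn2] at h2 <;> omega

/-- Two-row cyclic lemma via a potential function. -/
lemma two_row (n : ℕ) (a b : Fin n → ℕ)
    (H : ∀ j, b j = 0 → 2 ≤ a (fpred j) + a j + b (fpred j)) :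
    n ≤ ∑ j : Fin n, (a j + b j) := by
  have step : ∀ j : Fin n,
      1 + min (a j + b j) 2 / 2 ≤ a j + b j + min (a (fpred j) + b (fpred j)) 2 / 2 := by
    intro j
    rcases Nat.eq_zero_or_pos (b j) with h0 | h0
    · have := H j h0; omega
    · omega
  have hsum : ∑ j : Fin n, (1 + min (a j + b j) 2 / 2)
      ≤ ∑ j : Fin n, (a j + b j + min (a (fpred j) + b (fpred j)) 2 / 2) :=
    Finset.sum_le_sum fun j _ => step j
  have e1 : ∑ j : Fin n, (1 + min (a j + b j) 2 / 2)
      = n + ∑ j : Fin n, min (a j + b j) 2 / 2 := by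
    rw [Finset.sum_add_distrib]; simp
  have e2 : ∑ j : Fin n, (a j + b j + min (a (fpred j) + b (fpred j)) 2 / 2)
      = (∑ j : Fin n, (a j + b j)) + ∑ j : Fin n, min (a (fpred j) + b (fpred j)) 2 / 2 := by
    rw [Finset.sum_add_distrib]
  have e3 : ∑ j : Fin n, min (a (fpred j) + b (fpred j)) 2 / 2
      = ∑ j : Fin n, min (a j + b j) 2 / 2 :=
    Function.Bijective.sum_comp fpred_bij (fun j => min (a j + b j) 2 / 2)
  rw [e1, e2, e3] at hsum
  omega

theorem stmt14 (m n : ℕ) (hm : 2 ≤ m) (hn : 2 ≤ n) :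
    italianDomNum (Fin m × Fin n) (strongAdj (cycleAdj m) (cycleAdj n)) = (m * n + 1) / 2 := by
  -- Upper bound: the checkerboard is an IDF of weight (m*n+1)/2
  have hchk : IsIDF (strongAdj (cycleAdj m) (cycleAdj n)) (chk (m := m) (n := n)) := by
    constructor
    · intro v; unfold chk; split <;> omega
    · rintro ⟨i, j⟩ h0
      have hp : (i.val + j.val) % 2 = 1 := by
        by_contra hc
        have : (i.val + j.val) % 2 = 0 := by omega
        simp [chk, this] at h0
      right
      have A1 : strongAdj (cycleAdj m) (cycleAdj n) (fpred i, fpred j) (i, j) :=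
        Or.inl ⟨fpred_adj i, fpred_adj j⟩
      have A2 : strongAdj (cycleAdj m) (cycleAdj n) (i, fpred j) (i, j) :=
        Or.inr (Or.inl ⟨rfl, fpred_adj j⟩)
      have A3 : strongAdj (cycleAdj m) (cycleAdj n) (fpred i, j) (i, j) :=
        Or.inr (Or.inr ⟨fpred_adj i, rfl⟩)
      have d12 : ((fpred i, fpred j) : Fin m × Fin n) ≠ (i, fpred j) := by
        intro h; exact fpred_ne hm i (congrArg Prod.fst h)
      have d13 : ((fpred i, fpred j) : Fin m × Fin n) ≠ (fpred i, j) := by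
        intro h; exact fpred_ne hn j (congrArg Prod.snd h)
      have d23 : ((i, fpred j) : Fin m × Fin n) ≠ (fpred i, j) := by
        intro h; exact fpred_ne hm i (congrArg Prod.fst h).symm
      have hiv := fpred_val i
      have hjv := fpred_val j
      have him := i.isLt
      have hjn := j.isLt
      by_cases hi0 : i.val = 0
      · -- j must be odd
        rw [if_pos hi0] at hiv
        have hj0 : j.val ≠ 0 := by omega
        rw [if_neg hj0] at hjv
        rcases Nat.mod_two_eq_zero_or_one m with hm2 | hm2
        · exact ⟨(i, fpred j), (fpred i, j), d23,
            A2, A3, chk_one (by omega), chk_one (by omega)⟩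
        · exact ⟨(fpred i, fpred j), (i, fpred j), d12,
            A1, A2, chk_one (by omega), chk_one (by omega)⟩
      · rw [if_neg hi0] at hiv
        by_cases hj0 : j.val = 0
        · rw [if_pos hj0] at hjv
          rcases Nat.mod_two_eq_zero_or_one n with hn2 | hn2
          · exact ⟨(i, fpred j), (fpred i, j), d23,
              A2, A3, chk_one (by omega), chk_one (by omega)⟩
          · exact ⟨(fpred i, fpred j), (fpred i, j), d13,
              A1, A3, chk_one (by omega), chk_one (by omega)⟩
        · rw [if_neg hj0] at hjv
          exact ⟨(i, fpred j), (fpred i, j), d23,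
            A2, A3, chk_one (by omega), chk_one (by omega)⟩
  -- weight of the checkerboard
  have hwt : ∑ v : Fin m × Fin n, chk v = (m * n + 1) / 2 := by
    rw [Fintype.sum_prod_type]
    have inner : ∀ i : Fin m, ∑ j : Fin n, chk (i, j) = (n + 1 - i.val % 2) / 2 := by
      intro i
      have h1 : ∑ j : Fin n, chk (i, j)
          = ∑ j : Fin n, (fun t => if (i.val + t) % 2 = 0 then 1 else 0) j.val :=
        Finset.sum_congr rfl fun j _ => rfl
      exact h1.trans ((Fin.sum_univ_eq_sum_range
        (fun t => if (i.val + t) % 2 = 0 then 1 else 0) n).trans (row_sum i.val n))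
    rw [Finset.sum_congr rfl fun i _ => inner i]
    have h2 : ∑ i : Fin m, (n + 1 - i.val % 2) / 2
        = ∑ i : Fin m, (fun t => (n + 1 - t % 2) / 2) i.val :=
      Finset.sum_congr rfl fun i _ => rfl
    exact h2.trans ((Fin.sum_univ_eq_sum_range
      (fun t => (n + 1 - t % 2) / 2) m).trans (col_sum n m))
  have hmem : (m * n + 1) / 2 ∈
      {w : ℕ | ∃ f : Fin m × Fin n → ℕ,
        IsIDF (strongAdj (cycleAdj m) (cycleAdj n)) f ∧ ∑ v, f v = w} :=
    ⟨chk, hchk, hwt⟩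
  -- Lower bound
  have hlow : ∀ w ∈ {w : ℕ | ∃ f : Fin m × Fin n → ℕ,
      IsIDF (strongAdj (cycleAdj m) (cycleAdj n)) f ∧ ∑ v, f v = w},
      (m * n + 1) / 2 ≤ w := by
    rintro w ⟨f, ⟨hb, hd⟩, hw⟩
    -- per-vertex local inequality
    have key : ∀ (i : Fin m) (j : Fin n), f (i, j) = 0 →
        2 ≤ f (fpred i, fpred j) + f (i, fpred j) + f (fpred i, j) := by
      intro i j h0
      have inNbr : ∀ x : Fin m × Fin n, strongAdj (cycleAdj m) (cycleAdj n) x (i, j) →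
          x = (fpred i, fpred j) ∨ x = (i, fpred j) ∨ x = (fpred i, j) := by
        rintro ⟨x1, x2⟩ (⟨h1, h2⟩ | ⟨h1, h2⟩ | ⟨h1, h2⟩)
        · exact Or.inl (Prod.ext (adj_eq_fpred h1) (adj_eq_fpred h2))
        · exact Or.inr (Or.inl (Prod.ext h1 (adj_eq_fpred h2)))
        · exact Or.inr (Or.inr (Prod.ext (adj_eq_fpred h1) h2))
      rcases hd (i, j) h0 with ⟨x, hadj, hx2⟩ | ⟨x, y, hxy, hax, hay, hx1, hy1⟩
      · rcases inNbr x hadj with h | h | h <;> rw [h] at hx2 <;> omega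
      · rcases inNbr x hax with h | h | h <;> rcases inNbr y hay with h' | h' | h' <;>
          rw [h] at hx1 <;> rw [h'] at hy1 <;>
          first
          | exact absurd (h.trans h'.symm) hxy
          | omega
    have rows : ∀ i : Fin m, n ≤ ∑ j : Fin n, (f (fpred i, j) + f (i, j)) := by
      intro i
      exact two_row n (fun j => f (fpred i, j)) (fun j => f (i, j))
        (fun j h0 => by
          have hk := key i j h0
          show 2 ≤ f (fpred i, fpred j) + f (fpred i, j) + f (i, fpred j)
          omega)
    have total : m * n ≤ ∑ i : Fin m, ∑ j : Fin n, (f (fpred i, j) + f (i, j)) := by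
      calc m * n = ∑ _i : Fin m, n := by simp [Finset.sum_const, Nat.mul_comm]
      _ ≤ _ := Finset.sum_le_sum fun i _ => rows i
    have e0 : ∑ i : Fin m, ∑ j : Fin n, (f (fpred i, j) + f (i, j))
        = (∑ i : Fin m, ∑ j : Fin n, f (fpred i, j))
          + ∑ i : Fin m, ∑ j : Fin n, f (i, j) := by
      rw [← Finset.sum_add_distrib]
      exact Finset.sum_congr rfl fun i _ => Finset.sum_add_distrib
    have e1 : ∑ i : Fin m, ∑ j : Fin n, f (fpred i, j)
        = ∑ i : Fin m, ∑ j : Fin n, f (i, j) :=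
      Function.Bijective.sum_comp fpred_bij (fun i => ∑ j : Fin n, f (i, j))
    have e2 : ∑ v : Fin m × Fin n, f v = ∑ i : Fin m, ∑ j : Fin n, f (i, j) :=
      Fintype.sum_prod_type f
    rw [e0, e1, ← e2, hw] at total
    omega
  unfold italianDomNum
  exact le_antisymm (Nat.sInf_le hmem) (le_csInf ⟨_, hmem⟩ hlow)
end

section
/- For integers m ≥ 2 and even n = 2s ≥ 2, the function f on V(C_m ⊗ C_n) defined by f((i, 2j−1)) = 1 for all 1 ≤ i ≤ m and 1 ≤ j ≤ s, and f = 0 otherwise, is an Italian dominating function of C_m ⊗ C_n of weight mn/2. -/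
lemma sum_even_range (k : ℕ) :
    (∑ j ∈ Finset.range (2 * k), if j % 2 = 0 then 1 else 0) = k := by
  induction k with
  | zero => simp
  | succ k ih =>
    have h : 2 * (k + 1) = (2 * k + 1) + 1 := by ring
    rw [h, Finset.sum_range_succ, Finset.sum_range_succ, ih]
    have h1 : (2 * k) % 2 = 0 := by omega
    have h2 : (2 * k + 1) % 2 = 1 := by omega
    simp [h1, h2]

theorem stmt15 (m s n : ℕ) (hm : 2 ≤ m) (hs : 1 ≤ s) (hn : n = 2 * s) :
    IsIDF (strongAdj (cycleAdj m) (cycleAdj n))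
      (fun p : Fin m × Fin n => if (p.2 : ℕ) % 2 = 0 then 1 else 0) ∧
    (∑ p : Fin m × Fin n, if (p.2 : ℕ) % 2 = 0 then 1 else 0) = m * n / 2  := by
  have hmpos : 0 < m := by omega
  have hnpos : 0 < n := by omega
  constructor
  · constructor
    · intro v; dsimp only; split <;> omega
    · intro ⟨i, j⟩ hv
      right
      dsimp only at hv
      have hjodd : (j : ℕ) % 2 = 1 := by
        by_contra h
        have h2 : (j : ℕ) % 2 = 0 := by omega
        simp [h2] at hv
      have hj1 : 1 ≤ (j : ℕ) := by omega
      have hjlt : (j : ℕ) < n := j.isLt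
      set j' : Fin n := ⟨(j : ℕ) - 1, by omega⟩ with hj'
      have hadjj : cycleAdj n j' j := by
        show (j : ℕ) = ((j : ℕ) - 1 + 1) % n
        rw [Nat.sub_add_cancel hj1, Nat.mod_eq_of_lt hjlt]
      set i' : Fin m := ⟨((i : ℕ) + (m - 1)) % m, Nat.mod_lt _ hmpos⟩ with hi'
      have hilt : (i : ℕ) < m := i.isLt
      have hadji : cycleAdj m i' i := by
        show (i : ℕ) = (((i : ℕ) + (m - 1)) % m + 1) % m
        rw [Nat.mod_add_mod]
        have : (i : ℕ) + (m - 1) + 1 = (i : ℕ) + m := by omega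
        rw [this, Nat.add_mod_right, Nat.mod_eq_of_lt hilt]
      refine ⟨(i', j'), (i, j'), ?_, Or.inl ⟨hadji, hadjj⟩, Or.inr (Or.inl ⟨rfl, hadjj⟩), ?_, ?_⟩
      · intro h
        have h1 : i' = i := congrArg Prod.fst h
        rw [h1] at hadji
        have h2 : (i : ℕ) = ((i : ℕ) + 1) % m := hadji
        rcases Nat.lt_or_ge ((i : ℕ) + 1) m with hlt | hge
        · rw [Nat.mod_eq_of_lt hlt] at h2; omega
        · have : (i : ℕ) + 1 = m := by omega
          rw [this] at h2
          simp [Nat.mod_self] at h2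
          omega
      · have hje : ((j' : ℕ)) % 2 = 0 := by simp only [hj']; omega
        simp [hje]
      · have hje : ((j' : ℕ)) % 2 = 0 := by simp only [hj']; omega
        simp [hje]
  · rw [Fintype.sum_prod_type]
    have hcol : (∑ j : Fin n, (if (j : ℕ) % 2 = 0 then 1 else 0)) = s := by
      rw [Fin.sum_univ_eq_sum_range (fun j => if j % 2 = 0 then 1 else 0), hn, sum_even_range]
    simp only [hcol, Finset.sum_const, Finset.card_univ, Fintype.card_fin, smul_eq_mul]
    rw [hn]
    have : m * (2 * s) = (m * s) * 2 := by ring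
    rw [this, Nat.mul_div_cancel _ (by norm_num)]
end

section
/- For odd integers m = 2r+1 and n = 2s+1 with r, s ≥ 1, the function f on V(C_m ⊗ C_n) defined by f((2i+1, 2j+1)) = 1 for 0 ≤ i ≤ r and 0 ≤ j ≤ s, f((2i, 2j)) = 1 for 1 ≤ i ≤ r and 1 ≤ j ≤ s, and f = 0 otherwise, is an Italian dominating function of C_m ⊗ C_n of weight (r+1)(s+1) + rs = ⌈mn/2⌉. -/
theorem stmt16 (r s m n : ℕ) (hr : 1 ≤ r) (hs : 1 ≤ s)
    (hm : m = 2 * r + 1) (hn : n = 2 * s + 1) :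
    IsIDF (strongAdj (cycleAdj m) (cycleAdj n))
      (fun p : Fin m × Fin n => if (p.1 : ℕ) % 2 = (p.2 : ℕ) % 2 then 1 else 0) ∧
    (∑ p : Fin m × Fin n, if (p.1 : ℕ) % 2 = (p.2 : ℕ) % 2 then 1 else 0)
      = (r + 1) * (s + 1) + r * s ∧
    (r + 1) * (s + 1) + r * s = (m * n + 1) / 2 := by
  subst hm hn
  have hcount0 : ∀ N : ℕ, (∑ i ∈ Finset.range N, if i % 2 = 0 then (1:ℕ) else 0) = (N+1)/2 := by
    intro N; induction N with
    | zero => simp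
    | succ k ih => rw [Finset.sum_range_succ, ih]; split <;> omega
  refine ⟨⟨?_, ?_⟩, ?_, ?_⟩
  · intro v; dsimp only; split <;> omega
  · rintro ⟨a, b⟩ h0
    have ha : (a : ℕ) < 2*r+1 := a.isLt
    have hb : (b : ℕ) < 2*s+1 := b.isLt
    have hpar : ¬ ((a:ℕ) % 2 = (b:ℕ) % 2) := by
      intro h; simp only [h, if_pos] at h0; exact absurd h0 (by simp)
    right
    by_cases hA : (a:ℕ) = 0
    · -- a = 0 even, b odd > 0
      refine ⟨(⟨2*r, by omega⟩, ⟨(b:ℕ)-1, by omega⟩), (a, ⟨(b:ℕ)-1, by omega⟩), ?_, ?_, ?_, ?_, ?_⟩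
      · intro h
        have := congrArg (fun p => ((p.1 : Fin (2*r+1)) : ℕ)) h
        simp only [Fin.val_mk] at this; omega
      · left
        refine ⟨?_, ?_⟩
        · show (a:ℕ) = (2*r + 1) % (2*r+1); rw [Nat.mod_self]; omega
        · show (b:ℕ) = ((b:ℕ) - 1 + 1) % (2*s+1)
          rw [Nat.sub_add_cancel (by omega), Nat.mod_eq_of_lt hb]
      · right; left
        refine ⟨rfl, ?_⟩
        show (b:ℕ) = ((b:ℕ) - 1 + 1) % (2*s+1)
        rw [Nat.sub_add_cancel (by omega), Nat.mod_eq_of_lt hb]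
      · show (if (2*r) % 2 = ((b:ℕ)-1) % 2 then 1 else 0) = 1
        rw [if_pos (by omega)]
      · show (if (a:ℕ) % 2 = ((b:ℕ)-1) % 2 then 1 else 0) = 1
        rw [if_pos (by omega)]
    · by_cases hB : (b:ℕ) = 0
      · -- b = 0 even, a odd > 0
        refine ⟨(⟨(a:ℕ)-1, by omega⟩, ⟨2*s, by omega⟩), (⟨(a:ℕ)-1, by omega⟩, b), ?_, ?_, ?_, ?_, ?_⟩
        · intro h
          have := congrArg (fun p => ((p.2 : Fin (2*s+1)) : ℕ)) h
          simp only [Fin.val_mk] at this; omega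
        · left
          refine ⟨?_, ?_⟩
          · show (a:ℕ) = ((a:ℕ) - 1 + 1) % (2*r+1)
            rw [Nat.sub_add_cancel (by omega), Nat.mod_eq_of_lt ha]
          · show (b:ℕ) = (2*s + 1) % (2*s+1); rw [Nat.mod_self]; omega
        · right; right
          refine ⟨?_, rfl⟩
          show (a:ℕ) = ((a:ℕ) - 1 + 1) % (2*r+1)
          rw [Nat.sub_add_cancel (by omega), Nat.mod_eq_of_lt ha]
        · show (if ((a:ℕ)-1) % 2 = (2*s) % 2 then 1 else 0) = 1
          rw [if_pos (by omega)]
        · show (if ((a:ℕ)-1) % 2 = (b:ℕ) % 2 then 1 else 0) = 1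
          rw [if_pos (by omega)]
      · -- a > 0, b > 0
        refine ⟨(⟨(a:ℕ)-1, by omega⟩, b), (a, ⟨(b:ℕ)-1, by omega⟩), ?_, ?_, ?_, ?_, ?_⟩
        · intro h
          have := congrArg (fun p => ((p.1 : Fin (2*r+1)) : ℕ)) h
          simp only [Fin.val_mk] at this; omega
        · right; right
          refine ⟨?_, rfl⟩
          show (a:ℕ) = ((a:ℕ) - 1 + 1) % (2*r+1)
          rw [Nat.sub_add_cancel (by omega), Nat.mod_eq_of_lt ha]
        · right; left
          refine ⟨rfl, ?_⟩
          show (b:ℕ) = ((b:ℕ) - 1 + 1) % (2*s+1)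
          rw [Nat.sub_add_cancel (by omega), Nat.mod_eq_of_lt hb]
        · show (if ((a:ℕ)-1) % 2 = (b:ℕ) % 2 then 1 else 0) = 1
          rw [if_pos (by omega)]
        · show (if (a:ℕ) % 2 = ((b:ℕ)-1) % 2 then 1 else 0) = 1
          rw [if_pos (by omega)]
  · rw [Fintype.sum_prod_type]
    have inner : ∀ a : Fin (2*r+1),
        (∑ b : Fin (2*s+1), if (a:ℕ) % 2 = (b:ℕ) % 2 then (1:ℕ) else 0)
          = s + (if (a:ℕ) % 2 = 0 then 1 else 0) := by
      intro a
      rw [Fin.sum_univ_eq_sum_range (fun i => if (a:ℕ) % 2 = i % 2 then (1:ℕ) else 0)]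
      by_cases h : (a:ℕ) % 2 = 0
      · rw [if_pos h]
        have : ∀ i : ℕ, (if (a:ℕ) % 2 = i % 2 then (1:ℕ) else 0) = (if i % 2 = 0 then 1 else 0) := by
          intro i; rw [h]
          by_cases hi : i % 2 = 0
          · rw [if_pos hi.symm, if_pos hi]
          · rw [if_neg (fun hh => hi hh.symm), if_neg hi]
        rw [Finset.sum_congr rfl (fun i _ => this i), hcount0]; omega
      · rw [if_neg h]
        have h1 : (a:ℕ) % 2 = 1 := by omega
        have : ∀ i : ℕ, (if (a:ℕ) % 2 = i % 2 then (1:ℕ) else 0) = (if i % 2 = 0 then 0 else 1) := by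
          intro i; rw [h1]
          by_cases hi : i % 2 = 0
          · rw [if_neg (by omega), if_pos hi]
          · rw [if_pos (by omega), if_neg hi]
        rw [Finset.sum_congr rfl (fun i _ => this i)]
        have := hcount0 (2*s+1)
        have hsplit : (∑ i ∈ Finset.range (2*s+1), if i % 2 = 0 then (0:ℕ) else 1)
            + (∑ i ∈ Finset.range (2*s+1), if i % 2 = 0 then (1:ℕ) else 0) = 2*s+1 := by
          rw [← Finset.sum_add_distrib]
          have : ∀ i : ℕ, ((if i % 2 = 0 then (0:ℕ) else 1) + (if i % 2 = 0 then (1:ℕ) else 0)) = 1 := by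
            intro i; split <;> omega
          rw [Finset.sum_congr rfl (fun i _ => this i), Finset.sum_const, Finset.card_range, smul_eq_mul, mul_one]
        omega
    rw [Finset.sum_congr rfl (fun a _ => inner a), Finset.sum_add_distrib, Finset.sum_const,
      Finset.card_univ, Fintype.card_fin,
      Fin.sum_univ_eq_sum_range (fun i => if i % 2 = 0 then (1:ℕ) else 0), hcount0]
    have : (2*r+1+1)/2 = r+1 := by omega
    rw [this]; ring
  · rw [show (2*r+1) * (2*s+1) + 1 = ((r+1) * (s+1) + r*s) * 2 by ring,
      Nat.mul_div_cancel _ (by norm_num)]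
end
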